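/- arXiv:1808.02545 — 6 statements merged into one kernel-verified Lean document; each statement's English description precedes it below -/
import Mathlib

section
/- Let W_b be a binding subwalk of an optimal closed walk W*(k) (a closed subwalk with terminus d whose travel time equals the optimal revisit time R*(k)). Then every target is visited at least once in W_b. -/
/-- A closed walk with `k` visits on `n` targets, modeled as a `k`-periodic
sequence of targets in which consecutive visits are distinct and every
target is visited at least once in each period. -/
structure CWalk (n k : ℕ) where
  seq : ℕ → Fin n
  periodic : ∀ i, seq (i + k) = seq i
  step : ∀ i, seq i ≠ seq (i + 1)
  covers : ∀ d : Fin n, ∃ i < k, seq i = d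

namespace CWalk

/-- Travel time from the `i`-th to the `j`-th visit. -/
noncomputable def tt {n k : ℕ} (c : Fin n → Fin n → ℝ) (W : CWalk n k) (i j : ℕ) : ℝ :=
  ∑ t ∈ Finset.Ico i j, c (W.seq t) (W.seq (t + 1))

/-- Duration of one period of the walk. -/
noncomputable def duration {n k : ℕ} (c : Fin n → Fin n → ℝ) (W : CWalk n k) : ℝ :=
  W.tt c 0 k

/-- Revisit time of target `d`: the maximum time between consecutive visits to `d`. -/
noncomputable def RT {n k : ℕ} (c : Fin n → Fin n → ℝ) (W : CWalk n k) (d : Fin n) : ℝ :=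
  sSup {T : ℝ | ∃ i j : ℕ, i < j ∧ W.seq i = d ∧ W.seq j = d ∧
    (∀ t, i < t → t < j → W.seq t ≠ d) ∧ T = W.tt c i j}

/-- Revisit time of the walk: maximum revisit time over all targets. -/
noncomputable def R {n k : ℕ} (c : Fin n → Fin n → ℝ) (W : CWalk n k) : ℝ :=
  sSup {T : ℝ | ∃ d : Fin n, T = W.RT c d}

end CWalk

/-- Optimal revisit time over all closed walks with `k` visits. -/
noncomputable def Rstar (n : ℕ) (c : Fin n → Fin n → ℝ) (k : ℕ) : ℝ :=
  sInf {T : ℝ | ∃ W : CWalk n k, T = W.R c}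

/-- Optimal TSP tour length: minimal duration of a closed walk with `n` visits
(each target is then visited exactly once). -/
noncomputable def TSPstar (n : ℕ) (c : Fin n → Fin n → ℝ) : ℝ :=
  sInf {T : ℝ | ∃ W : CWalk n n, T = W.duration c}

section Aux
variable {n k : ℕ} (c : Fin n → Fin n → ℝ) (W : CWalk n k)

lemma seq_add_mul (t m : ℕ) : W.seq (t + m * k) = W.seq t := by
  induction m with
  | zero => simp
  | succ m ih => rw [Nat.succ_mul, ← Nat.add_assoc, W.periodic, ih]

lemma tt_nonneg (hc : ∀ u v : Fin n, u ≠ v → 0 < c u v) (i j : ℕ) :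
    0 ≤ W.tt c i j :=
  Finset.sum_nonneg fun t _ => (hc _ _ (W.step t)).le

lemma tt_add {i j l : ℕ} (h1 : i ≤ j) (h2 : j ≤ l) :
    W.tt c i j + W.tt c j l = W.tt c i l :=
  Finset.sum_Ico_consecutive _ h1 h2

lemma tt_pos (hc : ∀ u v : Fin n, u ≠ v → 0 < c u v) {i j : ℕ} (h : i < j) :
    0 < W.tt c i j :=
  Finset.sum_pos (fun t _ => hc _ _ (W.step t)) ⟨i, Finset.mem_Ico.2 ⟨le_rfl, h⟩⟩

lemma tt_shift (a b : ℕ) : W.tt c (a + k) (b + k) = W.tt c a b := by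
  unfold CWalk.tt
  rw [Finset.sum_Ico_eq_sum_range, Finset.sum_Ico_eq_sum_range]
  rw [show b + k - (a + k) = b - a by omega]
  refine Finset.sum_congr rfl fun t _ => ?_
  rw [show a + k + t = (a + t) + k by ring, show a + t + k + 1 = (a + t + 1) + k by ring,
    W.periodic, W.periodic]

lemma tt_window (i : ℕ) : W.tt c i (i + k) = W.tt c 0 k := by
  induction i with
  | zero => simp
  | succ i ih =>
    have h1 : W.tt c i (i+1) + W.tt c (i+1) (i+1+k) = W.tt c i (i+1+k) :=
      tt_add c W (by omega) (by omega)
    have h2 : W.tt c i (i+k) + W.tt c (i+k) (i+1+k) = W.tt c i (i+1+k) :=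
      tt_add c W (by omega) (by omega)
    have h3 : W.tt c i (i+1) = c (W.seq i) (W.seq (i+1)) := by
      unfold CWalk.tt
      rw [show i + 1 = i + 1 by rfl, Finset.sum_Ico_eq_sum_range]
      simp
    have h4 : W.tt c (i+k) (i+1+k) = c (W.seq i) (W.seq (i+1)) := by
      unfold CWalk.tt
      rw [Finset.sum_Ico_eq_sum_range, show i + 1 + k - (i + k) = 1 by omega]
      simp only [Finset.range_one, Finset.sum_singleton, Nat.add_zero]
      rw [show i + k + 1 = (i + 1) + k by ring, W.periodic, W.periodic]
    linarith

end Aux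

section Main
variable {n k : ℕ} (c : Fin n → Fin n → ℝ) (W : CWalk n k)

lemma RT_bddAbove (hc : ∀ u v : Fin n, u ≠ v → 0 < c u v) (hk0 : 0 < k) (u : Fin n) :
    BddAbove {T : ℝ | ∃ i j : ℕ, i < j ∧ W.seq i = u ∧ W.seq j = u ∧
      (∀ t, i < t → t < j → W.seq t ≠ u) ∧ T = W.tt c i j} := by
  refine ⟨W.tt c 0 k, ?_⟩
  rintro T ⟨i, j, hij, hi, hj, hbetween, rfl⟩
  have hjk : j ≤ i + k := by
    by_contra h
    exact hbetween (i + k) (by omega) (by omega) (by rw [W.periodic]; exact hi)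
  have h1 : W.tt c i j ≤ W.tt c i (i + k) := by
    apply Finset.sum_le_sum_of_subset_of_nonneg
    · exact Finset.Ico_subset_Ico le_rfl hjk
    · exact fun t _ _ => (hc _ _ (W.step t)).le
  calc W.tt c i j ≤ W.tt c i (i + k) := h1
    _ = W.tt c 0 k := tt_window c W i

lemma RT_le_R (hc : ∀ u v : Fin n, u ≠ v → 0 < c u v) (u : Fin n) :
    W.RT c u ≤ W.R c := by
  apply le_csSup
  · have : {T : ℝ | ∃ d : Fin n, T = W.RT c d} = Set.range (fun d => W.RT c d) := by
      ext T; simp [Set.range, eq_comm]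
    rw [this]
    exact (Set.finite_range _).bddAbove
  · exact ⟨u, rfl⟩

end Main

/-- Every binding subwalk of an optimal closed walk visits every target. -/
theorem binding_subwalk_visits_all_targets
    (n k : ℕ) (hn : 2 ≤ n) (hk : n ≤ k)
    (c : Fin n → Fin n → ℝ)
    (hc : ∀ u v : Fin n, u ≠ v → 0 < c u v)
    (htri : ∀ u v w : Fin n, c u w ≤ c u v + c v w)
    (W : CWalk n k) (hopt : W.R c = Rstar n c k)
    (d : Fin n) (a b : ℕ) (hab : a < b)
    (ha : W.seq a = d) (hb : W.seq b = d)
    (hmid : ∀ t, a < t → t < b → W.seq t ≠ d)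
    (hbind : W.tt c a b = Rstar n c k) :
    ∀ u : Fin n, ∃ t, a ≤ t ∧ t ≤ b ∧ W.seq t = u := by
  intro u
  by_contra hcon
  push_neg at hcon
  have hu : ∀ t, a ≤ t → t ≤ b → W.seq t ≠ u := fun t h1 h2 => hcon t h1 h2
  have hk0 : 0 < k := by omega
  obtain ⟨i0, hi0k, hi0⟩ := W.covers u
  -- i : last visit of u before a + k
  set S : Finset ℕ := (Finset.range (a + k)).filter (fun t => W.seq t = u) with hS
  have hSne : S.Nonempty := ⟨i0, Finset.mem_filter.2 ⟨Finset.mem_range.2 (by omega), hi0⟩⟩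
  set i := S.max' hSne with hidef
  have hiS := S.max'_mem hSne
  have hilt : i < a + k := Finset.mem_range.1 (Finset.mem_filter.1 hiS).1
  have hiu : W.seq i = u := (Finset.mem_filter.1 hiS).2
  have hi_max : ∀ t, i < t → t < a + k → W.seq t ≠ u := by
    intro t h1 h2 ht
    exact absurd (S.le_max' t (Finset.mem_filter.2 ⟨Finset.mem_range.2 h2, ht⟩)) (by omega)
  -- j : first visit of u after b + k
  have hex : ∃ t, b + k < t ∧ W.seq t = u := by
    refine ⟨i0 + (b + k + 1) * k, ?_, by rw [seq_add_mul W i0 (b + k + 1)]; exact hi0⟩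
    have : b + k + 1 ≤ (b + k + 1) * k := Nat.le_mul_of_pos_right _ hk0
    omega
  set j := Nat.find hex with hjdef
  obtain ⟨hjgt, hju⟩ := Nat.find_spec hex
  have hj_min : ∀ t, b + k < t → t < j → W.seq t ≠ u := by
    intro t h1 h2 ht
    exact absurd (⟨h1, ht⟩ : b + k < t ∧ W.seq t = u) (Nat.find_min hex h2)
  have hij : i < j := by omega
  -- no visit of u strictly between i and j
  have hbetween : ∀ t, i < t → t < j → W.seq t ≠ u := by
    intro t h1 h2
    rcases lt_or_ge t (a + k) with h | h
    · exact hi_max t h1 h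
    · rcases le_or_gt t (b + k) with h' | h'
      · have : W.seq t = W.seq (t - k) := by
          rw [show t = (t - k) + k by omega, W.periodic]
          rw [show (t - k) + k - k = t - k by omega]
        rw [this]
        exact hu (t - k) (by omega) (by omega)
      · exact hj_min t h' h2
  -- travel time estimate
  have hsplit1 : W.tt c i (a + k) + W.tt c (a + k) j = W.tt c i j :=
    tt_add c W (by omega) (by omega)
  have hsplit2 : W.tt c (a + k) (b + k) + W.tt c (b + k) j = W.tt c (a + k) j :=
    tt_add c W (by omega) (by omega)
  have hpos1 : 0 < W.tt c i (a + k) := tt_pos c W hc hilt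
  have hnn2 : 0 ≤ W.tt c (b + k) j := tt_nonneg c W hc _ _
  have hshift : W.tt c (a + k) (b + k) = W.tt c a b := tt_shift c W a b
  have hgt : W.tt c a b < W.tt c i j := by linarith
  -- tt i j ≤ RT u ≤ R = Rstar = tt a b
  have hmem : W.tt c i j ∈ {T : ℝ | ∃ i' j' : ℕ, i' < j' ∧ W.seq i' = u ∧ W.seq j' = u ∧
      (∀ t, i' < t → t < j' → W.seq t ≠ u) ∧ T = W.tt c i' j'} :=
    ⟨i, j, hij, hiu, hju, hbetween, rfl⟩
  have hRT : W.tt c i j ≤ W.RT c u := le_csSup (RT_bddAbove c W hc hk0 u) hmem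
  have hR : W.RT c u ≤ W.R c := RT_le_R c W hc u
  rw [hopt, ← hbind] at hR
  linarith
end

section
/- Let k = pn + q with integers p ≥ 1 and 0 ≤ q ≤ n−1. Any closed walk W with k visits on n targets contains a closed subwalk with a terminus having at least n + ⌈q/p⌉ visits. Consequently R*(k) ≥ R*(n + ⌈q/p⌉). -/
namespace Aux

/-- periodic sum shift -/
lemma periodic_sum {M : Type*} [AddCommMonoid M] (g : ℕ → M) (k : ℕ)
    (hg : ∀ t, g (t + k) = g t) (a : ℕ) :
    ∑ t ∈ Finset.Ico a (a + k), g t = ∑ t ∈ Finset.Ico 0 k, g t := by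
  induction a with
  | zero => simp
  | succ a ih =>
    rcases Nat.eq_zero_or_pos k with hk | hk
    · simp [hk]
    · rw [← ih]
      have h1 : a + 1 + k = (a + k) + 1 := by omega
      rw [h1, Finset.sum_Ico_succ_top (by omega) g,
        Finset.sum_eq_sum_Ico_succ_bot (by omega : a < a + k) g, hg a]
      ring_nf
      rw [add_comm]

lemma sum_sub_telescope (v : ℕ → ℕ) (hmono : ∀ m, v m ≤ v (m + 1)) (M : ℕ) :
    ∑ m ∈ Finset.range M, (v (m + 1) - v m) = v M - v 0 := by
  induction M with
  | zero => simp
  | succ M ih =>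
    have h0 : v 0 ≤ v M := (monotone_nat_of_le_succ hmono) (Nat.zero_le M)
    rw [Finset.sum_range_succ, ih]
    have := hmono M
    omega

lemma nat_ivt (f : ℕ → ℕ) (hstep : ∀ b, f (b + 1) ≤ f b + 1) (B r : ℕ)
    (h0 : f 0 ≤ r) (hB : r ≤ f B) : ∃ b ≤ B, f b = r := by
  induction B with
  | zero => exact ⟨0, le_refl _, by omega⟩
  | succ B ih =>
    by_cases h : r ≤ f B
    · obtain ⟨b, hb, hfb⟩ := ih h
      exact ⟨b, by omega, hfb⟩
    · exact ⟨B + 1, le_refl _, by have := hstep B; omega⟩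

variable {n k : ℕ}

lemma kpos (W : CWalk n k) (hn : 0 < n) : 0 < k := by
  obtain ⟨i, hik, -⟩ := W.covers ⟨0, hn⟩
  omega

variable (c : Fin n → Fin n → ℝ) (W : CWalk n k)

lemma seq_add_mul (a m : ℕ) : W.seq (a + k * m) = W.seq a := by
  induction m with
  | zero => simp
  | succ m ih => rw [Nat.mul_succ, ← Nat.add_assoc, W.periodic, ih]

lemma edge_nonneg (hc : ∀ u v : Fin n, u ≠ v → 0 < c u v) (t : ℕ) : 0 ≤ c (W.seq t) (W.seq (t + 1)) :=
  (hc _ _ (W.step t)).le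

lemma tt_nonneg (hc : ∀ u v : Fin n, u ≠ v → 0 < c u v) (i j : ℕ) : 0 ≤ W.tt c i j :=
  Finset.sum_nonneg fun t _ => edge_nonneg c W hc t

lemma tt_add {i j l : ℕ} (h1 : i ≤ j) (h2 : j ≤ l) :
    W.tt c i j + W.tt c j l = W.tt c i l :=
  Finset.sum_Ico_consecutive _ h1 h2

lemma tt_mono (hc : ∀ u v : Fin n, u ≠ v → 0 < c u v) {i j l : ℕ} (h1 : i ≤ j) (h2 : j ≤ l) : W.tt c i j ≤ W.tt c i l := by
  have h4 := tt_add c W (i := i) (j := j) (l := l) h1 h2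
  have h3 := tt_nonneg c W hc j l
  linarith

lemma c_le_tt (htri : ∀ u v w : Fin n, c u w ≤ c u v + c v w) {i j : ℕ} (h : i < j) :
    c (W.seq i) (W.seq j) ≤ W.tt c i j := by
  induction j, h using Nat.le_induction with
  | base =>
    rw [CWalk.tt, Finset.sum_Ico_eq_sum_range]
    simp
  | succ j hj ih =>
    have h1 : W.tt c i j + W.tt c j (j + 1) = W.tt c i (j + 1) :=
      tt_add c W (by omega) (by omega)
    have h2 : W.tt c j (j + 1) = c (W.seq j) (W.seq (j + 1)) := by
      rw [CWalk.tt, Finset.sum_Ico_eq_sum_range]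
      simp
    calc c (W.seq i) (W.seq (j + 1)) ≤ c (W.seq i) (W.seq j) + c (W.seq j) (W.seq (j + 1)) :=
          htri _ _ _
      _ ≤ W.tt c i j + W.tt c j (j + 1) := by rw [h2]; linarith
      _ = W.tt c i (j + 1) := h1

lemma tt_shift (a : ℕ) : W.tt c a (a + k) = W.duration c := by
  unfold CWalk.tt CWalk.duration CWalk.tt
  have := periodic_sum (fun t => c (W.seq t) (W.seq (t + 1))) k
    (fun t => by
      show c (W.seq (t + k)) (W.seq (t + k + 1)) = c (W.seq t) (W.seq (t + 1))
      rw [show t + k + 1 = t + 1 + k by omega, W.periodic, W.periodic]) a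
  simpa using this

/-- consecutive visits to `d` -/
def Consec (W : CWalk n k) (d : Fin n) (i j : ℕ) : Prop :=
  i < j ∧ W.seq i = d ∧ W.seq j = d ∧ ∀ t, i < t → t < j → W.seq t ≠ d

lemma Consec.le_add {W : CWalk n k} {d : Fin n} {i j : ℕ} (hn : 0 < n)
    (h : Consec W d i j) : j ≤ i + k := by
  by_contra hcon
  have hk := kpos W hn
  have : W.seq (i + k) = d := by rw [W.periodic]; exact h.2.1
  exact h.2.2.2 (i + k) (by omega) (by omega) this

lemma Consec.shift {W : CWalk n k} {d : Fin n} {i j : ℕ} (h : Consec W d i j) :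
    Consec W d (i + k) (j + k) := by
  obtain ⟨h1, h2, h3, h4⟩ := h
  refine ⟨by omega, by rw [W.periodic]; exact h2, by rw [W.periodic]; exact h3, ?_⟩
  intro t ht1 ht2
  have : t = (t - k) + k := by omega
  rw [this, W.periodic]
  exact h4 (t - k) (by omega) (by omega)

lemma tt_consec_le_duration (hc : ∀ u v : Fin n, u ≠ v → 0 < c u v) {d : Fin n} {i j : ℕ} (hn : 0 < n)
    (h : Consec W d i j) : W.tt c i j ≤ W.duration c := by
  have h1 : W.tt c i j ≤ W.tt c i (i + k) :=
    tt_mono c W hc (le_of_lt h.1) (h.le_add hn)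
  rw [tt_shift c W i] at h1
  exact h1

lemma duration_nonneg (hc : ∀ u v : Fin n, u ≠ v → 0 < c u v) : 0 ≤ W.duration c := tt_nonneg c W hc 0 k

lemma gapSet_bddAbove (hc : ∀ u v : Fin n, u ≠ v → 0 < c u v) (hn : 0 < n) (d : Fin n) :
    BddAbove {T : ℝ | ∃ i j : ℕ, i < j ∧ W.seq i = d ∧ W.seq j = d ∧
      (∀ t, i < t → t < j → W.seq t ≠ d) ∧ T = W.tt c i j} := by
  refine ⟨W.duration c, ?_⟩
  rintro T ⟨i, j, h1, h2, h3, h4, rfl⟩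
  exact tt_consec_le_duration c W hc hn ⟨h1, h2, h3, h4⟩

lemma tt_le_RT (hc : ∀ u v : Fin n, u ≠ v → 0 < c u v) {d : Fin n} {i j : ℕ} (hn : 0 < n) (h : Consec W d i j) :
    W.tt c i j ≤ W.RT c d := by
  apply le_csSup (gapSet_bddAbove c W hc hn d)
  exact ⟨i, j, h.1, h.2.1, h.2.2.1, h.2.2.2, rfl⟩

lemma RT_le_duration (hc : ∀ u v : Fin n, u ≠ v → 0 < c u v) (hn : 0 < n) (d : Fin n) : W.RT c d ≤ W.duration c := by
  apply Real.sSup_le _ (duration_nonneg c W hc)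
  rintro T ⟨i, j, h1, h2, h3, h4, rfl⟩
  exact tt_consec_le_duration c W hc hn ⟨h1, h2, h3, h4⟩

lemma RT_nonneg (hc : ∀ u v : Fin n, u ≠ v → 0 < c u v) (d : Fin n) : 0 ≤ W.RT c d := by
  apply Real.sSup_nonneg
  rintro T ⟨i, j, h1, h2, h3, h4, rfl⟩
  exact tt_nonneg c W hc i j

lemma RT_le_R (hc : ∀ u v : Fin n, u ≠ v → 0 < c u v) (hn : 0 < n) (d : Fin n) : W.RT c d ≤ W.R c := by
  apply le_csSup
  · exact ⟨W.duration c, by rintro T ⟨d', rfl⟩; exact RT_le_duration c W hc hn d'⟩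
  · exact ⟨d, rfl⟩

lemma R_le_duration (hc : ∀ u v : Fin n, u ≠ v → 0 < c u v) (hn : 0 < n) : W.R c ≤ W.duration c := by
  apply Real.sSup_le _ (duration_nonneg c W hc)
  rintro T ⟨d, rfl⟩
  exact RT_le_duration c W hc hn d

lemma R_nonneg (hc : ∀ u v : Fin n, u ≠ v → 0 < c u v) : 0 ≤ W.R c := by
  apply Real.sSup_nonneg
  rintro T ⟨d, rfl⟩
  exact RT_nonneg c W hc d


lemma exists_next (W : CWalk n k) (hn : 0 < n) (d : Fin n) (t : ℕ) :
    ∃ s, t < s ∧ W.seq s = d := by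
  obtain ⟨a, hak, ha⟩ := W.covers d
  have hk := kpos W hn
  refine ⟨a + k * (t + 1), by nlinarith, ?_⟩
  rw [seq_add_mul]
  exact ha

noncomputable def nextV (W : CWalk n k) (hn : 0 < n) (d : Fin n) (t : ℕ) : ℕ :=
  Nat.find (exists_next W hn d t)

lemma nextV_lt (W : CWalk n k) (hn : 0 < n) (d : Fin n) (t : ℕ) : t < nextV W hn d t :=
  (Nat.find_spec (exists_next W hn d t)).1

lemma nextV_seq (W : CWalk n k) (hn : 0 < n) (d : Fin n) (t : ℕ) : W.seq (nextV W hn d t) = d :=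
  (Nat.find_spec (exists_next W hn d t)).2

lemma nextV_min (W : CWalk n k) (hn : 0 < n) (d : Fin n) (t s : ℕ)
    (h1 : t < s) (h2 : s < nextV W hn d t) : W.seq s ≠ d := by
  intro hs
  exact Nat.find_min (exists_next W hn d t) h2 ⟨h1, hs⟩

noncomputable def firstV (W : CWalk n k) (d : Fin n) : ℕ :=
  Nat.find (⟨(W.covers d).choose, (W.covers d).choose_spec.2⟩ : ∃ t, W.seq t = d)

lemma firstV_seq (W : CWalk n k) (d : Fin n) : W.seq (firstV W d) = d :=
  Nat.find_spec (⟨(W.covers d).choose, (W.covers d).choose_spec.2⟩ : ∃ t, W.seq t = d)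

noncomputable def visits (W : CWalk n k) (hn : 0 < n) (d : Fin n) : ℕ → ℕ :=
  fun m => (nextV W hn d)^[m] (firstV W d)

lemma visits_zero (W : CWalk n k) (hn : 0 < n) (d : Fin n) :
    visits W hn d 0 = firstV W d := rfl

lemma visits_succ (W : CWalk n k) (hn : 0 < n) (d : Fin n) (m : ℕ) :
    visits W hn d (m + 1) = nextV W hn d (visits W hn d m) := by
  unfold visits
  rw [Function.iterate_succ_apply']

lemma visits_seq (W : CWalk n k) (hn : 0 < n) (d : Fin n) (m : ℕ) :
    W.seq (visits W hn d m) = d := by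
  cases m with
  | zero => exact firstV_seq W d
  | succ m => rw [visits_succ]; exact nextV_seq W hn d _

lemma visits_lt (W : CWalk n k) (hn : 0 < n) (d : Fin n) (m : ℕ) :
    visits W hn d m < visits W hn d (m + 1) := by
  rw [visits_succ]; exact nextV_lt W hn d _

lemma visits_mono (W : CWalk n k) (hn : 0 < n) (d : Fin n) : StrictMono (visits W hn d) :=
  strictMono_nat_of_lt_succ (visits_lt W hn d)

lemma visits_consec (W : CWalk n k) (hn : 0 < n) (d : Fin n) (m : ℕ) :
    Consec W d (visits W hn d m) (visits W hn d (m + 1)) := by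
  refine ⟨visits_lt W hn d m, visits_seq W hn d m, visits_seq W hn d (m + 1), ?_⟩
  intro t h1 h2
  rw [visits_succ] at h2
  exact nextV_min W hn d _ t h1 h2

/-- number of visits to `d` in the window `[a, a+k)` -/
noncomputable def cnt (W : CWalk n k) (d : Fin n) (a : ℕ) : ℕ :=
  ((Finset.Ico a (a + k)).filter (fun t => W.seq t = d)).card

lemma cnt_shift (W : CWalk n k) (d : Fin n) (a : ℕ) : cnt W d a = cnt W d 0 := by
  unfold cnt
  rw [Finset.card_filter, Finset.card_filter]
  have := periodic_sum (fun t => if W.seq t = d then 1 else 0) k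
    (fun t => by
      show (if W.seq (t + k) = d then 1 else 0) = (if W.seq t = d then 1 else 0)
      rw [W.periodic]) a
  simpa using this

lemma sum_cnt (W : CWalk n k) : ∑ d : Fin n, cnt W d 0 = k := by
  unfold cnt
  have := Finset.card_eq_sum_card_fiberwise
    (f := W.seq) (s := Finset.Ico 0 (0 + k)) (t := Finset.univ) (fun x _ => Finset.mem_univ _)
  rw [← this]
  simp

lemma exists_low_cnt (W : CWalk n k) {p q : ℕ} (hn : 0 < n) (hq : q < n)
    (hk : k = p * n + q) : ∃ d : Fin n, cnt W d 0 ≤ p := by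
  by_contra hcon
  push_neg at hcon
  have h1 : (Finset.univ : Finset (Fin n)).card • (p + 1) ≤ ∑ d : Fin n, cnt W d 0 :=
    Finset.card_nsmul_le_sum _ _ _ (fun x _ => hcon x)
  rw [sum_cnt W] at h1
  simp only [Finset.card_univ, Fintype.card_fin, smul_eq_mul] at h1
  nlinarith

lemma window_card_ge (W : CWalk n k) (hn : 0 < n) (d : Fin n) (p' : ℕ)
    (h : visits W hn d p' < visits W hn d 0 + k) :
    p' + 1 ≤ cnt W d (visits W hn d 0) := by
  unfold cnt
  have h2 : (Finset.range (p' + 1)).card ≤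
      ((Finset.Ico (visits W hn d 0) (visits W hn d 0 + k)).filter (fun t => W.seq t = d)).card := by
    apply Finset.card_le_card_of_injOn (visits W hn d)
    · intro m hm
      rw [Finset.mem_coe, Finset.mem_range] at hm
      rw [Finset.mem_coe, Finset.mem_filter, Finset.mem_Ico]
      refine ⟨⟨(visits_mono W hn d).monotone (Nat.zero_le m), ?_⟩, visits_seq W hn d m⟩
      calc visits W hn d m ≤ visits W hn d p' := (visits_mono W hn d).monotone (by omega)
        _ < visits W hn d 0 + k := h
    · exact (visits_mono W hn d).injective.injOn
  simpa using h2

/-- Part 1: existence of a long gap -/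
lemma exists_big_gap (W : CWalk n k) {p q : ℕ} (hn : 2 ≤ n) (hp : 1 ≤ p) (hq : q ≤ n - 1)
    (hk : k = p * n + q) :
    ∃ (d : Fin n) (i j : ℕ), Consec W d i j ∧ n + (q + p - 1) / p ≤ j - i := by
  have hn0 : 0 < n := by omega
  obtain ⟨d, hd⟩ := exists_low_cnt W hn0 (by omega) hk
  set v := visits W hn0 d with hv
  set r := (q + p - 1) / p with hr
  have hk0 : 0 < k := kpos W hn0
  -- v p ≥ v 0 + k
  have hvp : v 0 + k ≤ v p := by
    by_contra hcon
    have hb : visits W hn0 d p = v p := rfl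
    have hb0 : visits W hn0 d 0 = v 0 := rfl
    have hwc := window_card_ge W hn0 d p (by omega)
    rw [cnt_shift] at hwc
    have hb : visits W hn0 d p = v p := rfl
    have hb0 : visits W hn0 d 0 = v 0 := rfl
    omega
  -- some gap is ≥ n + r
  by_contra hcon
  push_neg at hcon
  have hgap : ∀ m ∈ Finset.range p, v (m + 1) - v m + 1 ≤ n + r := by
    intro m _
    have h1 := hcon d (v m) (v (m + 1)) (visits_consec W hn0 d m)
    omega
  have hsum : ∑ m ∈ Finset.range p, (v (m + 1) - v m + 1) ≤ p * (n + r) := by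
    have := Finset.sum_le_card_nsmul (Finset.range p) _ (n + r) hgap
    simpa [mul_comm] using this
  rw [Finset.sum_add_distrib, sum_sub_telescope v (fun m => le_of_lt (visits_lt W hn0 d m))] at hsum
  simp only [Finset.sum_const, Finset.card_range, smul_eq_mul, mul_one] at hsum
  have hrp : r * p ≤ q + p - 1 := Nat.div_mul_le_self (q + p - 1) p
  have hdist : p * (n + r) = p * n + r * p := by ring
  have h0M : v 0 ≤ v p := (visits_mono W hn0 d).monotone (Nat.zero_le p)
  omega


/-- A maximal gap exists, is long, and covers all targets. -/
lemma exists_max_gap (W : CWalk n k) {p q : ℕ} (hn : 2 ≤ n) (hp : 1 ≤ p) (hq : q ≤ n - 1)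
    (hk : k = p * n + q) :
    ∃ (d : Fin n) (i j : ℕ), Consec W d i j ∧ n + (q + p - 1) / p ≤ j - i ∧
      (∀ x : Fin n, ∃ t, i ≤ t ∧ t < j ∧ W.seq t = x) := by
  have hn0 : 0 < n := by omega
  have hk0 : 0 < k := kpos W hn0
  set S : Set ℕ := {L | ∃ (d : Fin n) (i j : ℕ), Consec W d i j ∧ L = j - i} with hS
  obtain ⟨d1, i1, j1, hc1, hlen1⟩ := exists_big_gap W hn hp hq hk
  have hne : S.Nonempty := ⟨j1 - i1, d1, i1, j1, hc1, rfl⟩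
  have hbdd : BddAbove S := by
    refine ⟨k, ?_⟩
    rintro L ⟨d', i', j', hc', rfl⟩
    have := hc'.le_add hn0
    omega
  obtain ⟨d0, i0, j0, hc0, hL⟩ := Nat.sSup_mem hne hbdd
  have hmax : ∀ (d' : Fin n) (i' j' : ℕ), Consec W d' i' j' → j' - i' ≤ j0 - i0 := by
    intro d' i' j' hc'
    rw [← hL]
    exact le_csSup hbdd ⟨d', i', j', hc', rfl⟩
  have hlen : n + (q + p - 1) / p ≤ j0 - i0 := le_trans hlen1 (hmax d1 i1 j1 hc1)
  have hshift := hc0.shift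
  refine ⟨d0, i0 + k, j0 + k, hshift, by omega, ?_⟩
  intro x
  by_contra hno
  push_neg at hno
  obtain ⟨a, hak, ha⟩ := W.covers x
  have hia : a ≤ i0 + k := by omega
  have hus : W.seq (Nat.findGreatest (fun t => W.seq t = x) (i0 + k)) = x :=
    Nat.findGreatest_spec (P := fun t => W.seq t = x) hia ha
  set u := Nat.findGreatest (fun t => W.seq t = x) (i0 + k) with hu
  have hui : u ≤ i0 + k := Nat.findGreatest_le _
  have hij : i0 + k < j0 + k := hshift.1
  have hxne : W.seq (i0 + k) ≠ x := hno (i0 + k) (le_refl _) hij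
  have huilt : u < i0 + k := by
    rcases lt_or_eq_of_le hui with h | h
    · exact h
    · exact absurd (h ▸ hus) hxne
  have hw1 : u < nextV W hn0 x u := nextV_lt W hn0 x u
  have hws : W.seq (nextV W hn0 x u) = x := nextV_seq W hn0 x u
  set w := nextV W hn0 x u with hwd
  have hjw : j0 + k ≤ w := by
    by_contra hcon2
    have hwi : ¬ w ≤ i0 + k := fun hwle =>
      Nat.findGreatest_is_greatest (P := fun t => W.seq t = x) (by omega) hwle hws
    exact hno w (by omega) (by omega) hws
  have hcw : Consec W x u w :=
    ⟨hw1, hus, hws, fun t h1 h2 => nextV_min W hn0 x u t h1 h2⟩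
  have := hmax x u w hcw
  omega


/-- The key construction: shortcut a covering gap into a walk with `c'` visits. -/
lemma exists_walk_le (W : CWalk n k) {c' : ℕ} (hn : 2 ≤ n) (hc' : n ≤ c')
    (hcc : ∀ u v : Fin n, u ≠ v → 0 < c u v)
    (htri : ∀ u v w : Fin n, c u w ≤ c u v + c v w)
    {d : Fin n} {i j : ℕ} (hcon : Consec W d i j) (hlen : c' ≤ j - i)
    (hcov : ∀ x : Fin n, ∃ t, i ≤ t ∧ t < j ∧ W.seq t = x) :
    ∃ W' : CWalk n c', W'.R c ≤ W.tt c i j := by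
  classical
  have hn0 : 0 < n := by omega
  have hij : i < j := hcon.1
  set L := j - i with hLdef
  have hjiL : j = i + L := by omega
  have hc'2 : 2 ≤ c' := by omega
  have hL2 : 2 ≤ L := by omega
  set T : ℕ → ℕ := fun b => ((Finset.Ico i (i + b + 1)).image W.seq).card with hT
  have hT0 : T 0 = 1 := by
    simp only [hT]
    norm_num [Nat.Ico_succ_singleton]
  have hTmono : ∀ b, T b ≤ T (b + 1) := fun b =>
    Finset.card_le_card (Finset.image_subset_image (Finset.Ico_subset_Ico (le_refl _) (by omega)))
  have hTle : ∀ b, T b ≤ b + 1 := fun b =>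
    le_trans Finset.card_image_le (by rw [Nat.card_Ico]; omega)
  have hTn : ∀ b, T b ≤ n := fun b =>
    le_trans (Finset.card_le_card (Finset.subset_univ _)) (by simp)
  set f : ℕ → ℕ := fun b => b + 1 - T b with hf
  have hstepf : ∀ b, f (b + 1) ≤ f b + 1 := by
    intro b
    have h1 := hTmono b
    have h2 := hTle b
    simp only [hf]
    omega
  have hTfull : T (L - 1) = n := by
    have hsub : (Finset.univ : Finset (Fin n)) ⊆ (Finset.Ico i (i + (L - 1) + 1)).image W.seq := by
      intro x _
      obtain ⟨t, ht1, ht2, ht3⟩ := hcov x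
      exact Finset.mem_image.mpr ⟨t, Finset.mem_Ico.mpr ⟨ht1, by omega⟩, ht3⟩
    have h2 := Finset.card_le_card hsub
    simp only [Finset.card_univ, Fintype.card_fin] at h2
    have h3 := hTn (L - 1)
    simp only [hT] at h3 ⊢
    omega
  have hf0 : f 0 ≤ c' - n := by simp only [hf]; rw [hT0]; omega
  have hfL : c' - n ≤ f (L - 1) := by
    simp only [hf]
    rw [hTfull]
    omega
  obtain ⟨b, hbB, hfb⟩ := nat_ivt f hstepf (L - 1) (c' - n) hf0 hfL
  have hfbval : b + 1 - T b = c' - n := by simpa [hf] using hfb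
  have hibj : i + b < j := by omega
  set blockT := (Finset.Ico i (i + b + 1)).image W.seq with hblockT
  have hTb : blockT.card = T b := rfl
  set M := (Finset.univ : Finset (Fin n)) \ blockT with hM
  have hMcard : M.card = n - T b := by
    rw [hM, Finset.card_sdiff_of_subset (Finset.subset_univ _), hTb]
    simp
  have hex : ∀ x ∈ M, ∃ s, i + b < s ∧ s < j ∧ W.seq s = x := by
    intro x hx
    obtain ⟨t, ht1, ht2, ht3⟩ := hcov x
    refine ⟨t, ?_, ht2, ht3⟩
    by_contra hle
    have hmem : x ∈ blockT := Finset.mem_image.mpr ⟨t, Finset.mem_Ico.mpr ⟨ht1, by omega⟩, ht3⟩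
    rw [hM] at hx
    exact (Finset.mem_sdiff.mp hx).2 hmem
  set F : Fin n → ℕ := fun x =>
    if h : ∃ s, i + b < s ∧ s < j ∧ W.seq s = x then Nat.find h else 0 with hF
  have hFspec : ∀ x ∈ M, i + b < F x ∧ F x < j ∧ W.seq (F x) = x := by
    intro x hx
    have h := hex x hx
    simp only [hF, dif_pos h]
    exact Nat.find_spec h
  set P := Finset.Ico i (i + b + 1) ∪ M.image F with hP
  have hdisj : Disjoint (Finset.Ico i (i + b + 1)) (M.image F) := by
    rw [Finset.disjoint_left]
    intro y hy hy2
    obtain ⟨x, hx, rfl⟩ := Finset.mem_image.mp hy2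
    have h1 := (hFspec x hx).1
    have h2 := Finset.mem_Ico.mp hy
    omega
  have hinj : Set.InjOn F M := by
    intro x hx y hy hxy
    have h1 := (hFspec x hx).2.2
    have h2 := (hFspec y hy).2.2
    rw [← h1, ← h2, hxy]
  have hPcard : P.card = c' := by
    rw [hP, Finset.card_union_of_disjoint hdisj, Finset.card_image_of_injOn hinj, hMcard,
      Nat.card_Ico]
    have h1 := hTle b
    have h2 := hTn b
    omega
  have hPmem : ∀ y ∈ P, i ≤ y ∧ y < j := by
    intro y hy
    rcases Finset.mem_union.mp hy with h | h
    · have := Finset.mem_Ico.mp h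
      omega
    · obtain ⟨x, hx, rfl⟩ := Finset.mem_image.mp h
      have h1 := (hFspec x hx).1
      have h2 := (hFspec x hx).2.1
      omega
  have hiP : i ∈ P := Finset.mem_union_left _ (Finset.mem_Ico.mpr ⟨le_refl _, by omega⟩)
  set e := P.orderIsoOfFin hPcard with he
  set g : ℕ → ℕ := fun t => if h : t < c' then (e ⟨t, h⟩ : ℕ) else j with hg
  have hgmem : ∀ t, (h : t < c') → g t ∈ P := by
    intro t h
    simp only [hg, dif_pos h]
    exact (e ⟨t, h⟩).2
  have hglt : ∀ {t t' : ℕ}, t < c' → t' < c' → t < t' → g t < g t' := by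
    intro t t' h h' htt
    simp only [hg, dif_pos h, dif_pos h']
    exact Subtype.coe_lt_coe.mpr (e.lt_iff_lt.mpr (Fin.mk_lt_mk.mpr htt))
  have hgsurj : ∀ y ∈ P, ∃ t, ∃ (h : t < c'), g t = y := by
    intro y hy
    refine ⟨(e.symm ⟨y, hy⟩ : Fin c'), (e.symm ⟨y, hy⟩).2, ?_⟩
    simp only [hg, dif_pos (e.symm ⟨y, hy⟩).2]
    have heta : (⟨(e.symm ⟨y, hy⟩ : Fin c'), (e.symm ⟨y, hy⟩).2⟩ : Fin c') = e.symm ⟨y, hy⟩ :=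
      Fin.ext rfl
    rw [heta, OrderIso.apply_symm_apply]
  have h0c : 0 < c' := by omega
  have hg0 : g 0 = i := by
    obtain ⟨t0, ht0, hgt0⟩ := hgsurj i hiP
    have h1 : i ≤ g 0 := (hPmem _ (hgmem 0 h0c)).1
    have h2 : g 0 ≤ g t0 := by
      rcases Nat.eq_zero_or_pos t0 with h | h
      · rw [h]
      · exact le_of_lt (hglt h0c ht0 h)
    omega
  have hgc' : g c' = j := by simp [hg]
  have hconsecP : ∀ t, t + 1 < c' → ∀ y ∈ P, ¬ (g t < y ∧ y < g (t + 1)) := by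
    rintro t ht y hy ⟨hy1, hy2⟩
    obtain ⟨s, hs, rfl⟩ := hgsurj y hy
    rcases le_or_gt s t with h | h
    · rcases eq_or_lt_of_le h with h2 | h2
      · rw [h2] at hy1
        exact lt_irrefl _ hy1
      · exact absurd hy1 (not_lt.mpr (le_of_lt (hglt hs (by omega) h2)))
    · have hss : t + 1 ≤ s := h
      have h3 : g (t + 1) ≤ g s := by
        rcases eq_or_lt_of_le hss with h4 | h4
        · rw [h4]
        · exact le_of_lt (hglt ht hs h4)
      omega
  have hG3 : ∀ t, t < c' → g t < g (t + 1) := by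
    intro t ht
    have hss : t + 1 ≤ c' := ht
    rcases lt_or_eq_of_le hss with h | h
    · exact hglt ht h (by omega)
    · rw [h, hgc']
      exact (hPmem _ (hgmem t ht)).2
  have hG4 : ∀ t, t < c' → W.seq (g t) ≠ W.seq (g (t + 1)) := by
    intro t ht
    have hss : t + 1 ≤ c' := ht
    rcases lt_or_eq_of_le hss with ht1 | ht1
    · have hy := hgmem (t + 1) ht1
      have hx := hgmem t ht
      have hlt := hglt ht ht1 (by omega)
      rcases Finset.mem_union.mp hy with hyb | hyf
      · have hyb' := Finset.mem_Ico.mp hyb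
        have hxb : g t ∈ Finset.Ico i (i + b + 1) := by
          rcases Finset.mem_union.mp hx with h | h
          · exact h
          · exfalso
            obtain ⟨x, hxM, hgx⟩ := Finset.mem_image.mp h
            have h1 := (hFspec x hxM).1
            omega
        have hxb' := Finset.mem_Ico.mp hxb
        have hsucc : g (t + 1) = g t + 1 := by
          by_contra hne
          have hmem1 : g t + 1 ∈ P :=
            Finset.mem_union_left _ (Finset.mem_Ico.mpr ⟨by omega, by omega⟩)
          exact hconsecP t ht1 (g t + 1) hmem1 ⟨by omega, by omega⟩
        rw [hsucc]
        exact W.step (g t)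
      · obtain ⟨x, hxM, hgx⟩ := Finset.mem_image.mp hyf
        have hxspec := hFspec x hxM
        have hseqy : W.seq (g (t + 1)) = x := by rw [← hgx]; exact hxspec.2.2
        rcases Finset.mem_union.mp hx with hb2 | hf2
        · have hmemb : W.seq (g t) ∈ blockT := Finset.mem_image_of_mem _ hb2
          rw [hseqy]
          intro heq
          have hxM2 := hxM
          rw [hM] at hxM2
          exact (Finset.mem_sdiff.mp hxM2).2 (heq ▸ hmemb)
        · obtain ⟨x', hx'M, hgx'⟩ := Finset.mem_image.mp hf2
          have hseqx : W.seq (g t) = x' := by rw [← hgx']; exact (hFspec x' hx'M).2.2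
          rw [hseqx, hseqy]
          intro heq
          have hgg : g t = g (t + 1) := by rw [← hgx', ← hgx, heq]
          omega
    · rw [ht1, hgc', hcon.2.2.1]
      have htpos : 0 < t := by omega
      have h1 : g 0 < g t := hglt h0c ht htpos
      rw [hg0] at h1
      exact hcon.2.2.2 (g t) h1 (hPmem _ (hgmem t ht)).2
  have hG5 : ∀ x : Fin n, ∃ t, ∃ (h : t < c'), W.seq (g t) = x := by
    intro x
    by_cases hxb : x ∈ blockT
    · obtain ⟨s, hs, hsx⟩ := Finset.mem_image.mp hxb
      obtain ⟨t, ht, hgt⟩ := hgsurj s (Finset.mem_union_left _ hs)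
      exact ⟨t, ht, by rw [hgt]; exact hsx⟩
    · have hxM : x ∈ M := by
        rw [hM]
        exact Finset.mem_sdiff.mpr ⟨Finset.mem_univ _, hxb⟩
      obtain ⟨t, ht, hgt⟩ := hgsurj (F x)
        (Finset.mem_union_right _ (Finset.mem_image_of_mem F hxM))
      exact ⟨t, ht, by rw [hgt]; exact (hFspec x hxM).2.2⟩
  have hmod1 : ∀ t : ℕ, (t + 1) % c' = (t % c' + 1) % c' := fun t => by
    rw [Nat.add_mod, Nat.mod_eq_of_lt (show 1 < c' by omega)]
  have hstep' : ∀ t : ℕ, W.seq (g (t % c')) ≠ W.seq (g ((t + 1) % c')) := by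
    intro t
    have halt : t % c' < c' := Nat.mod_lt t h0c
    have hss : t % c' + 1 ≤ c' := halt
    rcases lt_or_eq_of_le hss with h1 | h1
    · have h2 : (t + 1) % c' = t % c' + 1 := by rw [hmod1, Nat.mod_eq_of_lt h1]
      rw [h2]
      exact hG4 _ halt
    · have h2 : (t + 1) % c' = 0 := by rw [hmod1, h1, Nat.mod_self]
      rw [h2]
      intro heq
      have e1 : W.seq (g (t % c' + 1)) = d := by rw [h1, hgc']; exact hcon.2.2.1
      have e0 : W.seq (g 0) = d := by rw [hg0]; exact hcon.2.1
      exact hG4 _ halt (heq.trans (e0.trans e1.symm))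
  have hcovers' : ∀ x : Fin n, ∃ t < c', W.seq (g (t % c')) = x := by
    intro x
    obtain ⟨t, ht, hgt⟩ := hG5 x
    exact ⟨t, ht, by rw [Nat.mod_eq_of_lt ht]; exact hgt⟩
  refine ⟨⟨fun t => W.seq (g (t % c')), fun t => by simp only [Nat.add_mod_right],
    hstep', hcovers'⟩, ?_⟩
  set W' : CWalk n c' := ⟨fun t => W.seq (g (t % c')), fun t => by simp only [Nat.add_mod_right],
    hstep', hcovers'⟩ with hW'
  have hseqW' : ∀ t, W'.seq t = W.seq (g (t % c')) := fun t => rfl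
  have hedge : ∀ t, t < c' → c (W'.seq t) (W'.seq (t + 1)) ≤ W.tt c (g t) (g (t + 1)) := by
    intro t ht
    have h1 : W'.seq t = W.seq (g t) := by rw [hseqW', Nat.mod_eq_of_lt ht]
    have h2 : W'.seq (t + 1) = W.seq (g (t + 1)) := by
      rw [hseqW']
      have hss : t + 1 ≤ c' := ht
      rcases lt_or_eq_of_le hss with h | h
      · rw [Nat.mod_eq_of_lt h]
      · rw [h, Nat.mod_self, hg0, hgc', hcon.2.1, hcon.2.2.1]
    rw [h1, h2]
    exact c_le_tt c W htri (hG3 t ht)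
  have hgle0 : ∀ m, m ≤ c' → g 0 ≤ g m := by
    intro m hm
    rcases Nat.eq_zero_or_pos m with h | h
    · rw [h]
    rcases lt_or_eq_of_le hm with h2 | h2
    · exact le_of_lt (hglt h0c h2 h)
    · rw [h2, hg0, hgc']
      omega
  have htel : ∀ m, m ≤ c' →
      (∑ t ∈ Finset.range m, c (W'.seq t) (W'.seq (t + 1))) ≤ W.tt c (g 0) (g m) := by
    intro m
    induction m with
    | zero =>
      intro _
      simp [CWalk.tt]
    | succ m ih =>
      intro hm
      rw [Finset.sum_range_succ]
      have h1 := ih (by omega)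
      have h2 := hedge m (by omega)
      have h3 : W.tt c (g 0) (g m) + W.tt c (g m) (g (m + 1)) = W.tt c (g 0) (g (m + 1)) :=
        tt_add c W (hgle0 m (by omega)) (le_of_lt (hG3 m (by omega)))
      linarith
  have hdur : W'.duration c ≤ W.tt c i j := by
    have h1 := htel c' (le_refl _)
    rw [hg0, hgc'] at h1
    show (∑ t ∈ Finset.Ico 0 c', c (W'.seq t) (W'.seq (t + 1))) ≤ W.tt c i j
    rw [Finset.range_eq_Ico] at h1
    exact h1
  exact le_trans (R_le_duration c W' hcc hn0) hdur


lemma walk_exists2 (m : ℕ) (hm : 2 ≤ m) (hme : Even m) : Nonempty (CWalk 2 m) := by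
  obtain ⟨c0, hc0⟩ := hme
  refine ⟨⟨fun t => ⟨t % 2, Nat.mod_lt t (by omega)⟩, ?_, ?_, ?_⟩⟩
  · intro t
    apply Fin.ext
    show (t + m) % 2 = t % 2
    omega
  · intro t
    simp only [ne_eq, Fin.mk.injEq]
    omega
  · intro x
    refine ⟨x.val, by have := x.isLt; omega, ?_⟩
    apply Fin.ext
    show x.val % 2 = x.val
    have := x.isLt
    omega

lemma walk_exists3 (n m : ℕ) (hn : 3 ≤ n) (hm : n ≤ m) : Nonempty (CWalk n m) := by
  have h0 : 0 < m := by omega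
  have hf : ∀ t : ℕ, (if t % m < n then t % m else 1 + (t % m - n) % 2) < n := by
    intro t
    split <;> omega
  refine ⟨⟨fun t => ⟨if t % m < n then t % m else 1 + (t % m - n) % 2, hf t⟩, ?_, ?_, ?_⟩⟩
  · intro t
    apply Fin.ext
    show (if (t + m) % m < n then (t + m) % m else 1 + ((t + m) % m - n) % 2) = _
    rw [Nat.add_mod_right]
  · intro t
    have ha : t % m < m := Nat.mod_lt t h0
    have hb : (t + 1) % m = (t % m + 1) % m := by
      rw [Nat.add_mod, Nat.mod_eq_of_lt (show 1 < m by omega)]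
    intro heq
    have hveq := congrArg Fin.val heq
    simp only at hveq
    rcases eq_or_lt_of_le (show t % m + 1 ≤ m from ha) with h1 | h1
    · rw [hb, h1, Nat.mod_self] at hveq
      split_ifs at hveq <;> omega
    · rw [hb, Nat.mod_eq_of_lt h1] at hveq
      split_ifs at hveq <;> omega
  · intro x
    have hx := x.isLt
    refine ⟨x.val, by omega, ?_⟩
    apply Fin.ext
    show (if x.val % m < n then x.val % m else 1 + (x.val % m - n) % 2) = x.val
    rw [Nat.mod_eq_of_lt (by omega)]
    rw [if_pos hx]

lemma no_CWalk_2_3 (W : CWalk 2 3) : False := by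
  have h01 : W.seq 0 ≠ W.seq 1 := by simpa using W.step 0
  have h12 : W.seq 1 ≠ W.seq 2 := by simpa using W.step 1
  have h23 : W.seq 2 ≠ W.seq 3 := by simpa using W.step 2
  have hper : W.seq 3 = W.seq 0 := by simpa using W.periodic 0
  rw [hper] at h23
  have a0 := (W.seq 0).isLt
  have a1 := (W.seq 1).isLt
  have a2 := (W.seq 2).isLt
  have e01 : (W.seq 0).val ≠ (W.seq 1).val := fun h => h01 (Fin.ext h)
  have e12 : (W.seq 1).val ≠ (W.seq 2).val := fun h => h12 (Fin.ext h)
  have e20 : (W.seq 2).val ≠ (W.seq 0).val := fun h => h23 (Fin.ext h)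
  omega

end Aux

/-- any closed walk with `k = p n + q` visits contains a closed
subwalk with a terminus having at least `n + ⌈q/p⌉` visits; consequently
`R*(k) ≥ R*(n + ⌈q/p⌉)`. Here `⌈q/p⌉ = (q + p - 1) / p` in natural division. -/
theorem subwalk_size_lower_bound
    (n p q k : ℕ) (hn : 2 ≤ n) (hp : 1 ≤ p) (hq : q ≤ n - 1)
    (hk : k = p * n + q)
    (c : Fin n → Fin n → ℝ)
    (hc : ∀ u v : Fin n, u ≠ v → 0 < c u v)
    (htri : ∀ u v w : Fin n, c u w ≤ c u v + c v w) :
    (∀ W : CWalk n k, ∃ (d : Fin n) (i j : ℕ), i < j ∧ W.seq i = d ∧ W.seq j = d ∧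
      (∀ t, i < t → t < j → W.seq t ≠ d) ∧ n + (q + p - 1) / p ≤ j - i) ∧
    Rstar n c (n + (q + p - 1) / p) ≤ Rstar n c k := by
  have hn0 : 0 < n := by omega
  have hkn : n ≤ k := by
    have h1 : n ≤ p * n := Nat.le_mul_of_pos_left n (by omega)
    omega
  constructor
  · intro W
    obtain ⟨d, i, j, hcon, hlen⟩ := Aux.exists_big_gap W hn hp hq hk
    exact ⟨d, i, j, hcon.1, hcon.2.1, hcon.2.2.1, hcon.2.2.2, hlen⟩
  · by_cases hB : {T : ℝ | ∃ W : CWalk n k, T = W.R c}.Nonempty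
    · apply le_csInf hB
      rintro T ⟨W, rfl⟩
      obtain ⟨d, i, j, hcon, hlen, hcov⟩ := Aux.exists_max_gap W hn hp hq hk
      obtain ⟨W', hW'⟩ := Aux.exists_walk_le c W hn (Nat.le_add_right n _) hc htri hcon hlen hcov
      have h1 : Rstar n c (n + (q + p - 1) / p) ≤ W'.R c := by
        apply csInf_le
        · refine ⟨0, ?_⟩
          rintro T ⟨W'', rfl⟩
          exact Aux.R_nonneg c W'' hc
        · exact ⟨W', rfl⟩
      have h2 : W.tt c i j ≤ W.RT c d := Aux.tt_le_RT c W hc hn0 hcon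
      have h3 : W.RT c d ≤ W.R c := Aux.RT_le_R c W hc hn0 d
      exact le_trans h1 (le_trans hW' (le_trans h2 h3))
    · have hBe : {T : ℝ | ∃ W : CWalk n k, T = W.R c} = ∅ :=
        Set.not_nonempty_iff_eq_empty.mp hB
      have hAe : {T : ℝ | ∃ W'' : CWalk n (n + (q + p - 1) / p), T = W''.R c} = ∅ := by
        rw [Set.eq_empty_iff_forall_notMem]
        rintro T ⟨W'', rfl⟩
        rcases lt_or_ge n 3 with h3 | h3
        · have hn2 : n = 2 := by omega
          subst hn2
          have hq1 : q ≤ 1 := by omega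
          rcases Nat.eq_zero_or_pos q with hq0 | hq0
          · obtain ⟨W⟩ := Aux.walk_exists2 k (by omega) ⟨p, by omega⟩
            exact hB ⟨W.R c, W, rfl⟩
          · have hq1' : q = 1 := by omega
            have hc3 : 2 + (q + p - 1) / p = 3 := by
              rw [hq1', show 1 + p - 1 = p by omega, Nat.div_self (by omega)]
            exact Aux.no_CWalk_2_3 (hc3 ▸ W'')
        · obtain ⟨W⟩ := Aux.walk_exists3 n k h3 hkn
          exact hB ⟨W.R c, W, rfl⟩
      show sInf _ ≤ sInf _
      rw [hAe, hBe, Real.sInf_empty]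
end

section
/- In any closed walk with k = pn + q visits on n targets (p ≥ 1, 0 ≤ q ≤ n−1), if every closed subwalk with a terminus has at most n + ⌈q/p⌉ − 1 visits, then every target is visited at least p + 1 times, contradicting the total count k < (p+1)n; hence some closed subwalk with a terminus has at least n + ⌈q/p⌉ visits. -/
/-- if every closed subwalk with a terminus of a walk with
`k = p n + q` visits has at most `n + ⌈q/p⌉ - 1` visits, then every target is
visited at least `p + 1` times per period; hence some closed subwalk with a
terminus has at least `n + ⌈q/p⌉` visits. -/
theorem subwalk_pigeonhole
    (n p q k : ℕ) (hn : 2 ≤ n) (hp : 1 ≤ p) (hq : q ≤ n - 1)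
    (hk : k = p * n + q) (W : CWalk n k) :
    ((∀ (d : Fin n) (i j : ℕ), i < j → W.seq i = d → W.seq j = d →
        (∀ t, i < t → t < j → W.seq t ≠ d) → j - i ≤ n + (q + p - 1) / p - 1) →
      ∀ d : Fin n, p + 1 ≤ ((Finset.range k).filter (fun i => W.seq i = d)).card) ∧
    (∃ (d : Fin n) (i j : ℕ), i < j ∧ W.seq i = d ∧ W.seq j = d ∧
      (∀ t, i < t → t < j → W.seq t ≠ d) ∧ n + (q + p - 1) / p ≤ j - i) := by

  classical
  obtain ⟨m, rfl⟩ : ∃ m, n = m + 1 := ⟨n - 1, by omega⟩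
  set c := (q + p - 1) / p with hc
  have hcp : c * p ≤ q + p - 1 := Nat.div_mul_le_self _ _
  have hc_lt : c * p < q + p := lt_of_le_of_lt hcp (by omega)
  set M := m + c with hM
  have hk0 : 0 < k := by
    rw [hk]
    exact Nat.lt_of_lt_of_le (Nat.mul_pos (by omega) (by omega)) (Nat.le_add_right _ _)
  have hpM : p * M < k := by
    calc p * M = p * m + c * p := by rw [hM]; ring
    _ < p * m + (q + p) := Nat.add_lt_add_left hc_lt _
    _ = p * (m + 1) + q := by ring
    _ = k := hk.symm
  have hper : ∀ t i, W.seq (i + t * k) = W.seq i := by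
    intro t
    induction t with
    | zero => simp
    | succ t ih =>
      intro i
      have e : i + (t + 1) * k = (i + t * k) + k := by ring
      rw [e, W.periodic, ih]
  have main : (∀ (d : Fin (m + 1)) (i j : ℕ), i < j → W.seq i = d → W.seq j = d →
        (∀ t, i < t → t < j → W.seq t ≠ d) → j - i ≤ m + 1 + c - 1) →
      ∀ d : Fin (m + 1), p + 1 ≤ ((Finset.range k).filter (fun i => W.seq i = d)).card := by
    intro H d
    obtain ⟨i0, hi0k, hi0⟩ := W.covers d
    have hex : ∀ i : ℕ, ∃ j, i < j ∧ W.seq j = d := by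
      intro i
      refine ⟨i0 + (i + 1) * k, ?_, by rw [hper]; exact hi0⟩
      have h := Nat.le_mul_of_pos_right (i + 1) hk0
      omega
    set nxt : ℕ → ℕ := fun i => Nat.find (hex i) with hnxt
    have hnlt : ∀ i, i < nxt i := fun i => (Nat.find_spec (hex i)).1
    have hnd : ∀ i, W.seq (nxt i) = d := fun i => (Nat.find_spec (hex i)).2
    have hnmin : ∀ i t, i < t → t < nxt i → W.seq t ≠ d := by
      intro i t h1 h2
      have := Nat.find_min (hex i) h2
      tauto
    have hgap : ∀ i, W.seq i = d → nxt i ≤ i + M := by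
      intro i hi
      have h1 := H d i (nxt i) (hnlt i) hi (hnd i) (hnmin i)
      have h2 := hnlt i
      omega
    set v : ℕ → ℕ := fun t => nxt^[t] i0 with hv
    have hvs : ∀ t, v (t + 1) = nxt (v t) := fun t => Function.iterate_succ_apply' _ _ _
    have hvd : ∀ t, W.seq (v t) = d := by
      intro t
      induction t with
      | zero => exact hi0
      | succ t ih => rw [hvs]; exact hnd _
    have hvmono : StrictMono v := strictMono_nat_of_lt_succ (fun t => by rw [hvs]; exact hnlt _)
    have hvle : ∀ t, v t ≤ i0 + t * M := by
      intro t
      induction t with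
      | zero => simp [hv]
      | succ t ih =>
        have h1 := hgap (v t) (hvd t)
        have h2 : (t + 1) * M = t * M + M := by ring
        rw [hvs]
        linarith
    have shift : ∀ a, ((Finset.Ico a (a + k)).filter (fun i => W.seq i = d)).card
        = ((Finset.range k).filter (fun i => W.seq i = d)).card := by
      intro a
      induction a with
      | zero => rw [Finset.range_eq_Ico]; norm_num
      | succ a ih =>
        rw [← ih, Finset.card_filter, Finset.card_filter]
        have e1 : a + 1 + k = (a + k) + 1 := by ring
        rw [e1, Finset.sum_Ico_succ_top (by omega), Finset.sum_eq_sum_Ico_succ_bot (a := a) (b := a + k) (f := fun x => if W.seq x = d then 1 else 0) (by omega)]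
        have e2 : W.seq (a + k) = W.seq a := W.periodic a
        rw [e2]
        exact Nat.add_comm _ _
    have hsub : (Finset.image v (Finset.range (p + 1))) ⊆
        (Finset.Ico i0 (i0 + k)).filter (fun i => W.seq i = d) := by
      intro x hx
      simp only [Finset.mem_image, Finset.mem_range] at hx
      obtain ⟨t, ht, rfl⟩ := hx
      simp only [Finset.mem_filter, Finset.mem_Ico]
      refine ⟨⟨?_, ?_⟩, hvd t⟩
      · have h0 : v 0 ≤ v t := hvmono.monotone (Nat.zero_le t)
        simpa [hv] using h0
      · have h1 := hvle t
        have h2 : t * M ≤ p * M := Nat.mul_le_mul_right M (by omega)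
        linarith
    have hcard : (Finset.image v (Finset.range (p + 1))).card = p + 1 := by
      rw [Finset.card_image_of_injective _ hvmono.injective, Finset.card_range]
    have h1 : p + 1 ≤ ((Finset.Ico i0 (i0 + k)).filter (fun i => W.seq i = d)).card := by
      rw [← hcard]
      exact Finset.card_le_card hsub
    rw [← shift i0]
    exact h1
  constructor
  · exact main
  · by_contra hcon
    push_neg at hcon
    have H : ∀ (d : Fin (m + 1)) (i j : ℕ), i < j → W.seq i = d → W.seq j = d →
        (∀ t, i < t → t < j → W.seq t ≠ d) → j - i ≤ m + 1 + c - 1 := by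
      intro d i j h1 h2 h3 h4
      have h5 := hcon d i j h1 h2 h3 h4
      omega
    have hall := main H
    have hsum : ∑ d : Fin (m + 1), ((Finset.range k).filter (fun i => W.seq i = d)).card = k := by
      have h := Finset.card_eq_sum_card_fiberwise
        (f := W.seq) (s := Finset.range k) (t := (Finset.univ : Finset (Fin (m + 1))))
        (fun x _ => Finset.mem_univ _)
      simpa using h.symm
    have hge : (m + 1) * (p + 1) ≤
        ∑ d : Fin (m + 1), ((Finset.range k).filter (fun i => W.seq i = d)).card := by
      calc (m + 1) * (p + 1) = ∑ _d : Fin (m + 1), (p + 1) := by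
            simp [Finset.sum_const, mul_comm]
        _ ≤ _ := Finset.sum_le_sum (fun d _ => hall d)
    have h2 : (m + 1) * (p + 1) = p * (m + 1) + (m + 1) := by ring
    have h3 : q ≤ m := by omega
    linarith [hsum, hge, h2, hk]
end

section
/- Let W be a closed walk with binding subwalk W_b, so that W = S_1 ∘ W_b ∘ S_2, and let W'_b be a closed walk obtained from W_b by shortcutting some visits while retaining the last visit to each target. Then the walk W̄ = S_1 ∘ W_b ∘ W'_b ∘ S_2 satisfies R(W̄) = R(W). -/
section Aux

variable {n κ : ℕ} {c : Fin n → Fin n → ℝ}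

lemma aux_seq_add_mul (V : CWalk n κ) (i q : ℕ) : V.seq (i + q * κ) = V.seq i := by
  induction q with
  | zero => simp
  | succ q ih =>
      have h : i + (q + 1) * κ = (i + q * κ) + κ := by ring
      rw [h, V.periodic, ih]

lemma aux_tt_add (V : CWalk n κ) {i j l : ℕ} (hij : i ≤ j) (hjl : j ≤ l) :
    V.tt c i j + V.tt c j l = V.tt c i l :=
  Finset.sum_Ico_consecutive _ hij hjl

lemma aux_tt_nonneg (V : CWalk n κ) (hcV : ∀ i, 0 ≤ c (V.seq i) (V.seq (i + 1))) (i j : ℕ) :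
    0 ≤ V.tt c i j :=
  Finset.sum_nonneg fun t _ => hcV t

lemma aux_tt_mono (V : CWalk n κ) (hcV : ∀ i, 0 ≤ c (V.seq i) (V.seq (i + 1)))
    {i i' j j' : ℕ} (hi : i' ≤ i) (hj : j ≤ j') : V.tt c i j ≤ V.tt c i' j' :=
  Finset.sum_le_sum_of_subset_of_nonneg (Finset.Ico_subset_Ico hi hj) fun t _ _ => hcV t

lemma aux_tt_shift (V : CWalk n κ) (i j : ℕ) : V.tt c (i + κ) (j + κ) = V.tt c i j := by
  unfold CWalk.tt
  rw [Finset.sum_Ico_eq_sum_range, Finset.sum_Ico_eq_sum_range]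
  have hd : j + κ - (i + κ) = j - i := by omega
  rw [hd]
  refine Finset.sum_congr rfl fun t _ => ?_
  have e1 : i + κ + t = (i + t) + κ := by omega
  have e2 : i + κ + t + 1 = (i + t + 1) + κ := by omega
  rw [e2, e1, V.periodic, V.periodic]

lemma aux_tt_shift_mul (V : CWalk n κ) (i j q : ℕ) :
    V.tt c (i + q * κ) (j + q * κ) = V.tt c i j := by
  induction q with
  | zero => simp
  | succ q ih =>
      have e1 : i + (q + 1) * κ = (i + q * κ) + κ := by ring
      have e2 : j + (q + 1) * κ = (j + q * κ) + κ := by ring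
      rw [e1, e2, aux_tt_shift, ih]

lemma aux_tt_window (V : CWalk n κ) (hκ : 0 < κ) (i : ℕ) :
    V.tt c i (i + κ) = V.tt c 0 κ := by
  obtain ⟨q, r, hr, hi⟩ : ∃ q r, r < κ ∧ i = r + q * κ :=
    ⟨i / κ, i % κ, Nat.mod_lt _ hκ, by
      have := Nat.mod_add_div i κ
      have hcomm : κ * (i / κ) = (i / κ) * κ := Nat.mul_comm _ _
      omega⟩
  have e1 : i = r + q * κ := hi
  have e2 : i + κ = (r + κ) + q * κ := by omega
  rw [e2, e1, aux_tt_shift_mul]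
  have hA : V.tt c 0 r + V.tt c r (r + κ) = V.tt c 0 (r + κ) :=
    aux_tt_add V (by omega) (by omega)
  have hB : V.tt c 0 κ + V.tt c κ (r + κ) = V.tt c 0 (r + κ) :=
    aux_tt_add V (by omega) (by omega)
  have hC : V.tt c κ (r + κ) = V.tt c 0 r := by
    have := aux_tt_shift (c := c) V 0 r
    simpa using this
  linarith

lemma aux_c_le_tt (V : CWalk n κ) (htri : ∀ u v w : Fin n, c u w ≤ c u v + c v w)
    {p q : ℕ} (h : p < q) : c (V.seq p) (V.seq q) ≤ V.tt c p q := by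
  induction q, h using Nat.le_induction with
  | base =>
      unfold CWalk.tt
      rw [Finset.sum_Ico_succ_top (le_refl p), Finset.Ico_self, Finset.sum_empty, zero_add]
  | succ q hq ih =>
      have := htri (V.seq p) (V.seq q) (V.seq (q + 1))
      have h2 : V.tt c p q + c (V.seq q) (V.seq (q + 1)) = V.tt c p (q + 1) := by
        unfold CWalk.tt
        rw [Finset.sum_Ico_succ_top (by omega : p ≤ q)]
      linarith

lemma aux_visit_window (V : CWalk n κ) (hκ : 0 < κ) (u : Fin n) (i : ℕ) :
    ∃ p, i < p ∧ p ≤ i + κ ∧ V.seq p = u := by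
  obtain ⟨i0, hi0, hs⟩ := V.covers u
  by_cases h : i < i0
  · exact ⟨i0, h, by omega, hs⟩
  · push_neg at h
    obtain ⟨q, r, hr, hqr⟩ : ∃ q r, r < κ ∧ i - i0 = q * κ + r :=
      ⟨(i - i0) / κ, (i - i0) % κ, Nat.mod_lt _ hκ, by
        have := Nat.mod_add_div (i - i0) κ
        have hcomm : κ * ((i - i0) / κ) = ((i - i0) / κ) * κ := Nat.mul_comm _ _
        omega⟩
    refine ⟨i0 + (q + 1) * κ, ?_, ?_, by rw [aux_seq_add_mul]; exact hs⟩
    · have e : (q + 1) * κ = q * κ + κ := by ring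
      omega
    · have e : (q + 1) * κ = q * κ + κ := by ring
      omega

end Aux

section Aux2

variable {n κ : ℕ} {c : Fin n → Fin n → ℝ}

lemma aux_gap_le_dur (V : CWalk n κ) (hκ : 0 < κ)
    (hcV : ∀ i, 0 ≤ c (V.seq i) (V.seq (i + 1))) {u : Fin n} {i j : ℕ}
    (hij : i < j) (hmid : ∀ t, i < t → t < j → V.seq t ≠ u)
    (hp3' : V.seq j = u) :
    V.tt c i j ≤ V.tt c 0 κ := by
  obtain ⟨p, hp1, hp2, hp3⟩ := aux_visit_window V hκ u i
  have hjp : j ≤ p := by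
    by_contra hc'
    exact hmid p hp1 (by omega) hp3
  calc V.tt c i j ≤ V.tt c i (i + κ) := aux_tt_mono V hcV le_rfl (by omega)
    _ = V.tt c 0 κ := aux_tt_window V hκ i

lemma aux_RT_bdd (V : CWalk n κ) (hκ : 0 < κ)
    (hcV : ∀ i, 0 ≤ c (V.seq i) (V.seq (i + 1))) (u : Fin n) :
    BddAbove {T : ℝ | ∃ i j : ℕ, i < j ∧ V.seq i = u ∧ V.seq j = u ∧
      (∀ t, i < t → t < j → V.seq t ≠ u) ∧ T = V.tt c i j} := by
  refine ⟨V.tt c 0 κ, ?_⟩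
  rintro T ⟨i, j, hij, hiu, hju, hmid, rfl⟩
  exact aux_gap_le_dur V hκ hcV hij hmid hju

lemma aux_RT_nonempty (V : CWalk n κ) (hκ : 0 < κ) (u : Fin n) :
    Set.Nonempty {T : ℝ | ∃ i j : ℕ, i < j ∧ V.seq i = u ∧ V.seq j = u ∧
      (∀ t, i < t → t < j → V.seq t ≠ u) ∧ T = V.tt c i j} := by
  obtain ⟨i0, hi0, hs⟩ := V.covers u
  have hex : ∃ p, i0 < p ∧ V.seq p = u := by
    obtain ⟨p, hp1, _, hp3⟩ := aux_visit_window V hκ u i0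
    exact ⟨p, hp1, hp3⟩
  refine ⟨V.tt c i0 (Nat.find hex), i0, Nat.find hex, (Nat.find_spec hex).1, hs,
    (Nat.find_spec hex).2, ?_, rfl⟩
  intro t ht1 ht2 htu
  exact absurd ⟨ht1, htu⟩ (Nat.find_min hex ht2)

lemma aux_gap_le_RT (V : CWalk n κ) (hκ : 0 < κ)
    (hcV : ∀ i, 0 ≤ c (V.seq i) (V.seq (i + 1))) {u : Fin n} {i j : ℕ}
    (hij : i < j) (hiu : V.seq i = u) (hju : V.seq j = u)
    (hmid : ∀ t, i < t → t < j → V.seq t ≠ u) :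
    V.tt c i j ≤ V.RT c u :=
  le_csSup (aux_RT_bdd V hκ hcV u) ⟨i, j, hij, hiu, hju, hmid, rfl⟩

lemma aux_RT_le_dur (V : CWalk n κ) (hκ : 0 < κ)
    (hcV : ∀ i, 0 ≤ c (V.seq i) (V.seq (i + 1))) (u : Fin n) :
    V.RT c u ≤ V.tt c 0 κ := by
  refine csSup_le (aux_RT_nonempty V hκ u) ?_
  rintro T ⟨i, j, hij, hiu, hju, hmid, rfl⟩
  exact aux_gap_le_dur V hκ hcV hij hmid hju

lemma aux_RT_le_R (V : CWalk n κ) (hκ : 0 < κ)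
    (hcV : ∀ i, 0 ≤ c (V.seq i) (V.seq (i + 1))) (u : Fin n) :
    V.RT c u ≤ V.R c := by
  refine le_csSup ⟨V.tt c 0 κ, ?_⟩ ⟨u, rfl⟩
  rintro T ⟨u', rfl⟩
  exact aux_RT_le_dur V hκ hcV u'

lemma aux_gap_le_R (V : CWalk n κ) (hκ : 0 < κ)
    (hcV : ∀ i, 0 ≤ c (V.seq i) (V.seq (i + 1))) {u : Fin n} {i j : ℕ}
    (hij : i < j) (hiu : V.seq i = u) (hju : V.seq j = u)
    (hmid : ∀ t, i < t → t < j → V.seq t ≠ u) :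
    V.tt c i j ≤ V.R c :=
  (aux_gap_le_RT V hκ hcV hij hiu hju hmid).trans (aux_RT_le_R V hκ hcV u)

end Aux2

section Aux3

variable {n κ : ℕ} {c : Fin n → Fin n → ℝ}

lemma aux_R_le (V : CWalk n κ) (hn0 : 0 < n) {x : ℝ}
    (h : ∀ u : Fin n, V.RT c u ≤ x) : V.R c ≤ x := by
  refine csSup_le ⟨V.RT c ⟨0, hn0⟩, ⟨0, hn0⟩, rfl⟩ ?_
  rintro T ⟨u, rfl⟩
  exact h u

lemma aux_RT_le (V : CWalk n κ) (hκ : 0 < κ) (u : Fin n) {x : ℝ}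
    (h : ∀ i j : ℕ, i < j → V.seq i = u → V.seq j = u →
      (∀ t, i < t → t < j → V.seq t ≠ u) → V.tt c i j ≤ x) :
    V.RT c u ≤ x := by
  refine csSup_le (aux_RT_nonempty V hκ u) ?_
  rintro T ⟨i, j, hij, hiu, hju, hmid, rfl⟩
  exact h i j hij hiu hju hmid

end Aux3


/-- inserting, right after a binding subwalk `W_b` (occupying the
visits `a,…,b` of `W`, with terminus `d`), a shortcut `W'_b` of `W_b`
(selected by the increasing index map `g`, retaining the last visit to each
target) yields a walk `W̄ = S₁ ∘ W_b ∘ W'_b ∘ S₂` with `R(W̄) = R(W)`. -/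
theorem concat_binding_shortcut
    (n k m : ℕ) (hn : 2 ≤ n) (hk : n ≤ k) (hm : 1 ≤ m)
    (c : Fin n → Fin n → ℝ)
    (hc : ∀ u v : Fin n, u ≠ v → 0 < c u v)
    (htri : ∀ u v w : Fin n, c u w ≤ c u v + c v w)
    (W : CWalk n k)
    (d : Fin n) (a b : ℕ) (hab : a < b) (hbk : b ≤ k)
    (ha : W.seq a = d) (hb : W.seq b = d)
    (hmid : ∀ t, a < t → t < b → W.seq t ≠ d)
    (hbind : W.tt c a b = W.R c)
    -- `g` selects the visits of `W_b` kept in the shortcut walk `W'_b`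
    (g : ℕ → ℕ) (hg0 : g 0 = a) (hgm : g m = b)
    (hgmono : ∀ j < m, g j < g (j + 1))
    (hgstep : ∀ j < m, W.seq (g j) ≠ W.seq (g (j + 1)))
    -- the last visit in `W_b` to each target is retained in `W'_b`
    (hlast : ∀ u : Fin n, ∃ j ≤ m, a ≤ g j ∧ g j ≤ b ∧ W.seq (g j) = u ∧
      ∀ t', g j < t' → t' ≤ b → W.seq t' ≠ u)
    -- `W̄ = S₁ ∘ W_b ∘ W'_b ∘ S₂`
    (Wbar : CWalk n (k + m))
    (h1 : ∀ i ≤ b, Wbar.seq i = W.seq i)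
    (h2 : ∀ j ≤ m, Wbar.seq (b + j) = W.seq (g j))
    (h3 : ∀ i, b + m ≤ i → i ≤ k + m → Wbar.seq i = W.seq (i - m)) :
    Wbar.R c = W.R c := by
  have hn0 : 0 < n := by omega
  have hk0 : 0 < k := by omega
  have hcW : ∀ i, 0 ≤ c (W.seq i) (W.seq (i + 1)) := fun i => (hc _ _ (W.step i)).le
  have hcB : ∀ i, 0 ≤ c (Wbar.seq i) (Wbar.seq (i + 1)) := fun i => (hc _ _ (Wbar.step i)).le
  have gmono : ∀ p q, p ≤ q → q ≤ m → g p ≤ g q := by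
    intro p q hpq
    induction q, hpq using Nat.le_induction with
    | base => intro _; exact le_rfl
    | succ q hq ih => intro hqm; exact le_trans (ih (by omega)) (hgmono q (by omega)).le
  have gbound : ∀ j ≤ m, a ≤ g j ∧ g j ≤ b := by
    intro j hj
    constructor
    · rw [← hg0]; exact gmono 0 j (by omega) hj
    · rw [← hgm]; exact gmono j m hj le_rfl
  have gstrict : ∀ p q, p < q → q ≤ m → g p < g q := by
    intro p q hpq hqm
    calc g p < g (p + 1) := hgmono p (by omega)
      _ ≤ g q := gmono (p + 1) q hpq hqm
  have Lsc : ∀ j1 j2, j1 ≤ j2 → j2 ≤ m →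
      (∑ t ∈ Finset.Ico j1 j2, c (W.seq (g t)) (W.seq (g (t + 1)))) ≤ W.tt c (g j1) (g j2) := by
    intro j1 j2 h12
    induction j2, h12 using Nat.le_induction with
    | base => intro _; simp [CWalk.tt]
    | succ j2 hj2 ih =>
        intro h2m
        rw [Finset.sum_Ico_succ_top hj2]
        have hstep : c (W.seq (g j2)) (W.seq (g (j2 + 1))) ≤ W.tt c (g j2) (g (j2 + 1)) :=
          aux_c_le_tt W htri (hgmono j2 (by omega))
        have hadd : W.tt c (g j1) (g j2) + W.tt c (g j2) (g (j2 + 1)) = W.tt c (g j1) (g (j2 + 1)) :=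
          aux_tt_add W (gmono j1 j2 hj2 (by omega)) (hgmono j2 (by omega)).le
        have hih := ih (by omega)
        linarith
  have Lmap : ∀ j1 j2, j2 ≤ m →
      Wbar.tt c (b + j1) (b + j2) = ∑ t ∈ Finset.Ico j1 j2, c (W.seq (g t)) (W.seq (g (t + 1))) := by
    intro j1 j2 h2m
    unfold CWalk.tt
    rw [Finset.sum_Ico_eq_sum_range, Finset.sum_Ico_eq_sum_range]
    have hd : b + j2 - (b + j1) = j2 - j1 := by omega
    rw [hd]
    refine Finset.sum_congr rfl fun t ht => ?_
    rw [Finset.mem_range] at ht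
    have e1 : b + j1 + t = b + (j1 + t) := by omega
    have e2 : b + j1 + t + 1 = b + (j1 + t + 1) := by omega
    rw [e2, e1, h2 (j1 + t) (by omega), h2 (j1 + t + 1) (by omega)]
  have Leq1 : ∀ i j, j ≤ b → Wbar.tt c i j = W.tt c i j := by
    intro i j hjb
    unfold CWalk.tt
    refine Finset.sum_congr rfl fun t ht => ?_
    rw [Finset.mem_Ico] at ht
    rw [h1 t (by omega), h1 (t + 1) (by omega)]
  have Leq3 : ∀ i j, b + m ≤ i → j ≤ k + m → Wbar.tt c i j = W.tt c (i - m) (j - m) := by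
    intro i j him hjK
    unfold CWalk.tt
    rw [Finset.sum_Ico_eq_sum_range, Finset.sum_Ico_eq_sum_range]
    have hd : j - m - (i - m) = j - i := by omega
    rw [hd]
    refine Finset.sum_congr rfl fun t ht => ?_
    rw [Finset.mem_range] at ht
    have e1 := h3 (i + t) (by omega) (by omega)
    have e2 := h3 (i + t + 1) (by omega) (by omega)
    rw [e1, e2, show i + t - m = i - m + t by omega,
      show i + t + 1 - m = i - m + t + 1 by omega]
  have hWgap : ∀ (u : Fin n) (p q : ℕ), p < q → W.seq p = u → W.seq q = u →
      (∀ t, p < t → t < q → W.seq t ≠ u) → W.tt c p q ≤ W.R c :=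
    fun u p q hpq hpu hqu hmidW => aux_gap_le_R W hk0 hcW hpq hpu hqu hmidW
  have hseqb : Wbar.seq b = d := by rw [h1 b le_rfl]; exact hb
  have hseqbm : Wbar.seq (b + m) = d := by rw [h2 m le_rfl, hgm]; exact hb
  have main : ∀ (u : Fin n) (i j : ℕ), i < k + m → i < j → Wbar.seq i = u → Wbar.seq j = u →
      (∀ t, i < t → t < j → Wbar.seq t ≠ u) → Wbar.tt c i j ≤ W.R c := by
    intro u i j hiK hij hiu hju hmidbar
    obtain ⟨j', hj'm, haj', hj'b, hsj', hafter⟩ := hlast u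
    have hbj' : Wbar.seq (b + j') = u := by rw [h2 j' hj'm]; exact hsj'
    have hwrap : k + m < j → j - (k + m) ≤ b := by
      intro hKj
      by_contra hcon
      push_neg at hcon
      have hpos : Wbar.seq (g j' + (k + m)) = u := by
        rw [Wbar.periodic (g j'), h1 (g j') hj'b]; exact hsj'
      exact hmidbar (g j' + (k + m)) (by omega) (by omega) hpos
    rcases le_or_gt j b with hjb | hbj
    · rw [Leq1 i j hjb]
      refine hWgap u i j hij ?_ ?_ ?_
      · rw [← h1 i (by omega)]; exact hiu
      · rw [← h1 j hjb]; exact hju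
      · intro t ht1 ht2
        rw [← h1 t (by omega)]
        exact hmidbar t ht1 ht2
    · rcases le_or_gt i b with hib | hbi
      · -- i ≤ b < j
        by_cases hud : u = d
        · -- u = d : forces i = b, j = b + m
          have hib' : i = b := by
            by_contra hne
            exact hmidbar b (by omega) hbj (by rw [hseqb]; exact hud.symm)
          have hjbm : j = b + m := by
            have hle : j ≤ b + m := by
              by_contra hgt
              push_neg at hgt
              exact hmidbar (b + m) (by omega) (by omega) (by rw [hseqbm]; exact hud.symm)
            by_contra hne
            have hlt : j < b + m := by omega
            have hga2 : a < g (j - b) := by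
              have := gstrict 0 (j - b) (by omega) (by omega); rwa [hg0] at this
            have hgb2 : g (j - b) < b := by
              have := gstrict (j - b) m (by omega) le_rfl; rwa [hgm] at this
            have hj2 : Wbar.seq j = W.seq (g (j - b)) := by
              have := h2 (j - b) (by omega)
              rwa [show b + (j - b) = j by omega] at this
            exact hmid (g (j - b)) hga2 hgb2 (by rw [← hj2, hju]; exact hud)
          rw [hib', hjbm]
          have hmap := Lmap 0 m le_rfl
          rw [show b + 0 = b by omega] at hmap
          rw [hmap]
          calc (∑ t ∈ Finset.Ico 0 m, c (W.seq (g t)) (W.seq (g (t + 1))))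
              ≤ W.tt c (g 0) (g m) := Lsc 0 m (by omega) le_rfl
            _ = W.R c := by rw [hg0, hgm]; exact hbind
        · -- u ≠ d
          have hj'1 : 1 ≤ j' := by
            rcases Nat.eq_zero_or_pos j' with h0 | h
            · exfalso; apply hud; rw [← hsj', h0, hg0]; exact ha
            · exact h
          have hj'm' : j' < m := by
            rcases eq_or_lt_of_le hj'm with h0 | h
            · exfalso; apply hud; rw [← hsj', h0, hgm]; exact hb
            · exact h
          have hjlt : j < b + m := by
            by_contra hge
            push_neg at hge
            exact hmidbar (b + j') (by omega) (by omega) hbj'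
          have hju' : W.seq (g (j - b)) = u := by
            have := h2 (j - b) (by omega)
            rw [show b + (j - b) = j by omega] at this
            rw [← this]; exact hju
          have hj'ge : j - b ≤ j' := by
            by_contra hlt'
            push_neg at hlt'
            exact hmidbar (b + j') (by omega) (by omega) hbj'
          have hgle : g (j - b) ≤ g j' := gmono (j - b) j' hj'ge hj'm
          have higj' : i = g j' := by
            have hle : g j' ≤ i := by
              by_contra hlt'
              push_neg at hlt'
              exact hmidbar (g j') hlt' (by omega) (by rw [h1 (g j') hj'b]; exact hsj')
            rcases eq_or_lt_of_le hle with h0 | h0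
            · exact h0.symm
            · exact absurd (by rw [← h1 i hib]; exact hiu) (hafter i h0 hib)
          have hd1 : Wbar.tt c i b + Wbar.tt c b j = Wbar.tt c i j :=
            aux_tt_add Wbar hib (by omega)
          have hd2 : Wbar.tt c i b = W.tt c (g j') b := by
            rw [Leq1 i b le_rfl, higj']
          have hd3 : Wbar.tt c b j ≤ W.tt c a (g (j - b)) := by
            have hmap := Lmap 0 (j - b) (by omega)
            rw [show b + 0 = b by omega, show b + (j - b) = j by omega] at hmap
            rw [hmap]
            have hls := Lsc 0 (j - b) (by omega) (by omega)
            rwa [hg0] at hls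
          have hd4 : W.tt c a (g (j - b)) ≤ W.tt c a (g j') := aux_tt_mono W hcW le_rfl hgle
          have hd5 : W.tt c a (g j') + W.tt c (g j') b = W.tt c a b :=
            aux_tt_add W haj' hj'b
          linarith [hbind]
      · -- b < i
        rcases lt_or_ge i (b + m) with him | him
        · -- shortcut region : i = b + (i - b), 0 < i - b < m
          have hi2m : i - b < m := by omega
          have hi2pos : 0 < i - b := by omega
          have hiu' : W.seq (g (i - b)) = u := by
            have := h2 (i - b) (by omega)
            rw [show b + (i - b) = i by omega] at this
            rw [← this]; exact hiu
          have hga2 : a < g (i - b) := by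
            have := gstrict 0 (i - b) hi2pos (by omega); rwa [hg0] at this
          have hgb2 : g (i - b) < b := by
            have := gstrict (i - b) m hi2m le_rfl; rwa [hgm] at this
          have hud : u ≠ d := by
            intro h0
            exact hmid (g (i - b)) hga2 hgb2 (by rw [hiu']; exact h0)
          have hj'm' : j' < m := by
            rcases eq_or_lt_of_le hj'm with h0 | h
            · exfalso; apply hud; rw [← hsj', h0, hgm]; exact hb
            · exact h
          have hgej : g (i - b) ≤ g j' := by
            by_contra hlt'
            push_neg at hlt'
            exact hafter (g (i - b)) hlt' (by omega) hiu'
          rcases le_or_gt j (b + m) with hjA | hjB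
          · -- within the shortcut block
            have hmap := Lmap (i - b) (j - b) (by omega)
            rw [show b + (i - b) = i by omega, show b + (j - b) = j by omega] at hmap
            rw [hmap]
            calc (∑ t ∈ Finset.Ico (i - b) (j - b), c (W.seq (g t)) (W.seq (g (t + 1))))
                ≤ W.tt c (g (i - b)) (g (j - b)) := Lsc (i - b) (j - b) (by omega) (by omega)
              _ ≤ W.tt c a b :=
                  aux_tt_mono W hcW (gbound (i - b) (by omega)).1 (gbound (j - b) (by omega)).2
              _ = W.R c := hbind
          · -- j > b + m : last-visit property kicks in
            have hj'le : j' ≤ i - b := by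
              by_contra hgt
              push_neg at hgt
              exact hmidbar (b + j') (by omega) (by omega) hbj'
            have hgeq : g j' = g (i - b) :=
              le_antisymm (gmono j' (i - b) hj'le (by omega)) hgej
            have nolate : ∀ t, g (i - b) < t → t ≤ b → W.seq t ≠ u := by
              intro t ht1 ht2
              exact hafter t (by rw [hgeq]; exact ht1) ht2
            have hd2 : Wbar.tt c i (b + m) ≤ W.tt c (g (i - b)) b := by
              have hmap := Lmap (i - b) m le_rfl
              rw [show b + (i - b) = i by omega] at hmap
              rw [hmap]
              have hls := Lsc (i - b) m (by omega) le_rfl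
              rwa [hgm] at hls
            rcases le_or_gt j (k + m) with hjC | hjD
            · -- b + m < j ≤ k + m : W-gap (g (i-b), j - m)
              have hjm : W.seq (j - m) = u := by rw [← h3 j (by omega) hjC]; exact hju
              have hgap : W.tt c (g (i - b)) (j - m) ≤ W.R c := by
                refine hWgap u _ _ (by omega) hiu' hjm ?_
                intro t ht1 ht2
                rcases le_or_gt t b with htb | htb
                · exact nolate t ht1 htb
                · have hh := h3 (t + m) (by omega) (by omega)
                  rw [show t + m - m = t by omega] at hh
                  rw [← hh]
                  exact hmidbar (t + m) (by omega) (by omega)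
              have hd1 : Wbar.tt c i (b + m) + Wbar.tt c (b + m) j = Wbar.tt c i j :=
                aux_tt_add Wbar (by omega) (by omega)
              have hd3 : Wbar.tt c (b + m) j = W.tt c b (j - m) := by
                have := Leq3 (b + m) j le_rfl hjC
                rwa [show b + m - m = b by omega] at this
              have hd4 : W.tt c (g (i - b)) b + W.tt c b (j - m) = W.tt c (g (i - b)) (j - m) :=
                aux_tt_add W (by omega) (by omega)
              linarith
            · -- j > k + m
              have hjKb : j - (k + m) ≤ b := hwrap hjD
              have hju2 : W.seq (j - (k + m)) = u := by
                have hper : Wbar.seq ((j - (k + m)) + (k + m)) = Wbar.seq (j - (k + m)) :=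
                  Wbar.periodic _
                rw [show (j - (k + m)) + (k + m) = j by omega] at hper
                rw [← h1 (j - (k + m)) hjKb, ← hper]; exact hju
              have hju3 : W.seq (k + (j - (k + m))) = u := by
                have hh := aux_seq_add_mul W (j - (k + m)) 1
                rw [one_mul] at hh
                rw [show k + (j - (k + m)) = (j - (k + m)) + k by omega, hh]
                exact hju2
              have hgap : W.tt c (g (i - b)) (k + (j - (k + m))) ≤ W.R c := by
                refine hWgap u _ _ (by omega) hiu' hju3 ?_
                intro t ht1 ht2
                rcases le_or_gt t b with htb | htb
                · exact nolate t ht1 htb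
                · rcases le_or_gt t k with htk | htk
                  · have hh := h3 (t + m) (by omega) (by omega)
                    rw [show t + m - m = t by omega] at hh
                    rw [← hh]
                    exact hmidbar (t + m) (by omega) (by omega)
                  · have hs : W.seq t = W.seq (t - k) := by
                      have hh := aux_seq_add_mul W (t - k) 1
                      rwa [one_mul, show t - k + k = t by omega] at hh
                    have hs2 : W.seq (t - k) = Wbar.seq (t - k) := (h1 (t - k) (by omega)).symm
                    have hs3 : Wbar.seq (t - k) = Wbar.seq ((t - k) + (k + m)) :=
                      (Wbar.periodic _).symm
                    rw [hs, hs2, hs3]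
                    exact hmidbar ((t - k) + (k + m)) (by omega) (by omega)
              have hd1 : Wbar.tt c i (b + m) + Wbar.tt c (b + m) j = Wbar.tt c i j :=
                aux_tt_add Wbar (by omega) (by omega)
              have hd1' : Wbar.tt c (b + m) (k + m) + Wbar.tt c (k + m) j = Wbar.tt c (b + m) j :=
                aux_tt_add Wbar (by omega) (by omega)
              have hd3 : Wbar.tt c (b + m) (k + m) = W.tt c b k := by
                have := Leq3 (b + m) (k + m) le_rfl le_rfl
                rwa [show b + m - m = b by omega, show k + m - m = k by omega] at this
              have hd4 : Wbar.tt c (k + m) j = W.tt c 0 (j - (k + m)) := by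
                have hsh : Wbar.tt c (0 + (k + m)) ((j - (k + m)) + (k + m)) =
                    Wbar.tt c 0 (j - (k + m)) := aux_tt_shift Wbar 0 (j - (k + m))
                rw [show (0 : ℕ) + (k + m) = k + m by omega,
                  show (j - (k + m)) + (k + m) = j by omega] at hsh
                rw [hsh]
                exact Leq1 0 (j - (k + m)) hjKb
              have hd5 : W.tt c 0 (j - (k + m)) = W.tt c k (k + (j - (k + m))) := by
                have hh := aux_tt_shift (c := c) W 0 (j - (k + m))
                rw [show (0 : ℕ) + k = k by omega] at hh
                rw [← hh, show (j - (k + m)) + k = k + (j - (k + m)) by omega]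
              have hd6 : W.tt c (g (i - b)) b + W.tt c b k = W.tt c (g (i - b)) k :=
                aux_tt_add W (by omega) (by omega)
              have hd7 : W.tt c (g (i - b)) k + W.tt c k (k + (j - (k + m))) =
                  W.tt c (g (i - b)) (k + (j - (k + m))) :=
                aux_tt_add W (by omega) (by omega)
              linarith
        · -- b + m ≤ i < k + m
          have hium : W.seq (i - m) = u := by rw [← h3 i him (by omega)]; exact hiu
          rcases le_or_gt j (k + m) with hjD | hjE
          · -- both in the suffix region
            have hjm : W.seq (j - m) = u := by rw [← h3 j (by omega) hjD]; exact hju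
            rw [Leq3 i j him hjD]
            refine hWgap u _ _ (by omega) hium hjm ?_
            intro t ht1 ht2
            have hh := h3 (t + m) (by omega) (by omega)
            rw [show t + m - m = t by omega] at hh
            rw [← hh]
            exact hmidbar (t + m) (by omega) (by omega)
          · -- j > k + m
            have hjKb : j - (k + m) ≤ b := hwrap hjE
            have hju2 : W.seq (j - (k + m)) = u := by
              have hper : Wbar.seq ((j - (k + m)) + (k + m)) = Wbar.seq (j - (k + m)) :=
                Wbar.periodic _
              rw [show (j - (k + m)) + (k + m) = j by omega] at hper
              rw [← h1 (j - (k + m)) hjKb, ← hper]; exact hju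
            have hju3 : W.seq (k + (j - (k + m))) = u := by
              have hh := aux_seq_add_mul W (j - (k + m)) 1
              rw [one_mul] at hh
              rw [show k + (j - (k + m)) = (j - (k + m)) + k by omega, hh]
              exact hju2
            have hgap : W.tt c (i - m) (k + (j - (k + m))) ≤ W.R c := by
              refine hWgap u _ _ (by omega) hium hju3 ?_
              intro t ht1 ht2
              rcases le_or_gt t k with htk | htk
              · have hh := h3 (t + m) (by omega) (by omega)
                rw [show t + m - m = t by omega] at hh
                rw [← hh]
                exact hmidbar (t + m) (by omega) (by omega)
              · have hs : W.seq t = W.seq (t - k) := by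
                  have hh := aux_seq_add_mul W (t - k) 1
                  rwa [one_mul, show t - k + k = t by omega] at hh
                have hs2 : W.seq (t - k) = Wbar.seq (t - k) := (h1 (t - k) (by omega)).symm
                have hs3 : Wbar.seq (t - k) = Wbar.seq ((t - k) + (k + m)) :=
                  (Wbar.periodic _).symm
                rw [hs, hs2, hs3]
                exact hmidbar ((t - k) + (k + m)) (by omega) (by omega)
            have hd1 : Wbar.tt c i (k + m) + Wbar.tt c (k + m) j = Wbar.tt c i j :=
              aux_tt_add Wbar (by omega) (by omega)
            have hd2 : Wbar.tt c i (k + m) = W.tt c (i - m) k := by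
              have := Leq3 i (k + m) him le_rfl
              rwa [show k + m - m = k by omega] at this
            have hd4 : Wbar.tt c (k + m) j = W.tt c 0 (j - (k + m)) := by
              have hsh : Wbar.tt c (0 + (k + m)) ((j - (k + m)) + (k + m)) =
                  Wbar.tt c 0 (j - (k + m)) := aux_tt_shift Wbar 0 (j - (k + m))
              rw [show (0 : ℕ) + (k + m) = k + m by omega,
                show (j - (k + m)) + (k + m) = j by omega] at hsh
              rw [hsh]
              exact Leq1 0 (j - (k + m)) hjKb
            have hd5 : W.tt c 0 (j - (k + m)) = W.tt c k (k + (j - (k + m))) := by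
              have hh := aux_tt_shift (c := c) W 0 (j - (k + m))
              rw [show (0 : ℕ) + k = k by omega] at hh
              rw [← hh, show (j - (k + m)) + k = k + (j - (k + m)) by omega]
            have hd7 : W.tt c (i - m) k + W.tt c k (k + (j - (k + m))) =
                W.tt c (i - m) (k + (j - (k + m))) :=
              aux_tt_add W (by omega) (by omega)
            linarith
  have allgaps : ∀ i j (u : Fin n), i < j → Wbar.seq i = u → Wbar.seq j = u →
      (∀ t, i < t → t < j → Wbar.seq t ≠ u) → Wbar.tt c i j ≤ W.R c := by
    intro i
    induction i using Nat.strong_induction_on with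
    | _ i ih =>
      intro j u hij hiu hju hmidbar
      rcases lt_or_ge i (k + m) with hiK | hKi
      · exact main u i j hiK hij hiu hju hmidbar
      · have e1 : Wbar.seq (i - (k + m)) = u := by
          rw [← Wbar.periodic (i - (k + m)), show i - (k + m) + (k + m) = i by omega]
          exact hiu
        have e2 : Wbar.seq (j - (k + m)) = u := by
          rw [← Wbar.periodic (j - (k + m)), show j - (k + m) + (k + m) = j by omega]
          exact hju
        have e3 : ∀ t, i - (k + m) < t → t < j - (k + m) → Wbar.seq t ≠ u := by
          intro t ht1 ht2
          rw [← Wbar.periodic t]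
          exact hmidbar (t + (k + m)) (by omega) (by omega)
        have e4 : Wbar.tt c (i - (k + m)) (j - (k + m)) = Wbar.tt c i j := by
          have hh := aux_tt_shift (c := c) Wbar (i - (k + m)) (j - (k + m))
          rw [show i - (k + m) + (k + m) = i by omega,
            show j - (k + m) + (k + m) = j by omega] at hh
          exact hh.symm
        rw [← e4]
        exact ih (i - (k + m)) (by omega) (j - (k + m)) u (by omega) e1 e2 e3
  apply le_antisymm
  · refine aux_R_le Wbar hn0 fun u => ?_
    refine aux_RT_le Wbar (by omega) u fun i j hij hiu hju hmidb => ?_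
    exact allgaps i j u hij hiu hju hmidb
  · have heq : Wbar.tt c a b = W.tt c a b := Leq1 a b le_rfl
    have hmem : W.tt c a b ≤ Wbar.RT c d := by
      rw [← heq]
      refine aux_gap_le_RT Wbar (by omega) hcB hab ?_ hseqb ?_
      · rw [h1 a (by omega)]; exact ha
      · intro t ht1 ht2
        rw [h1 t (by omega)]
        exact hmid t ht1 ht2
    calc W.R c = W.tt c a b := hbind.symm
      _ ≤ Wbar.RT c d := hmem
      _ ≤ Wbar.R c := aux_RT_le_R Wbar (by omega) hcB d
end

section
/- Let W*(k) be an optimal closed walk with n+1 ≤ k ≤ 2n−1 visits and W(k−1) a shortcut walk of W*(k) obtained by removing one revisit. The closed walk W̄ formed by concatenating q ≥ 1 copies of W*(k) followed by p ≥ 0 copies of W(k−1) satisfies R(W̄) = R(W*(k)). -/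
namespace CWalk

-- AUX LEMMAS

variable {n k : ℕ}

lemma seq_add_mul (W : CWalk n k) (i m : ℕ) : W.seq (i + m * k) = W.seq i := by
  induction m with
  | zero => simp
  | succ m ih =>
    have h : i + (m + 1) * k = (i + m * k) + k := by ring
    rw [h, W.periodic, ih]

lemma seq_mod (W : CWalk n k) (i : ℕ) : W.seq i = W.seq (i % k) := by
  have h : i % k + (i / k) * k = i := Nat.mod_add_div' i k
  conv_lhs => rw [← h]
  exact W.seq_add_mul _ _

lemma tt_single (c : Fin n → Fin n → ℝ) (W : CWalk n k) (a : ℕ) :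
    W.tt c a (a + 1) = c (W.seq a) (W.seq (a + 1)) := by
  unfold tt
  rw [Finset.sum_Ico_succ_top (le_refl a), Finset.Ico_self, Finset.sum_empty, zero_add]

lemma tt_add (c : Fin n → Fin n → ℝ) (W : CWalk n k) {a b d : ℕ} (h1 : a ≤ b) (h2 : b ≤ d) :
    W.tt c a d = W.tt c a b + W.tt c b d :=
  (Finset.sum_Ico_consecutive _ h1 h2).symm

lemma tt_mono (c : Fin n → Fin n → ℝ) (hc : ∀ u v : Fin n, u ≠ v → 0 < c u v)
    (W : CWalk n k) {a b d : ℕ} (h : b ≤ d) : W.tt c a b ≤ W.tt c a d := by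
  apply Finset.sum_le_sum_of_subset_of_nonneg (Finset.Ico_subset_Ico le_rfl h)
  intro t _ _
  exact le_of_lt (hc _ _ (W.step t))

lemma tt_window (c : Fin n → Fin n → ℝ) (W : CWalk n k) (a : ℕ) :
    W.tt c a (a + k) = W.duration c := by
  induction a with
  | zero => simp [duration]
  | succ a ih =>
    have hper1 : W.seq (a + k) = W.seq a := W.periodic a
    have hper2 : W.seq (a + k + 1) = W.seq (a + 1) := by
      rw [show a + k + 1 = (a + 1) + k from by ring]
      exact W.periodic (a + 1)
    have e1 : W.tt c a (a + k + 1)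
        = W.tt c a (a + k) + c (W.seq (a + k)) (W.seq (a + k + 1)) := by
      unfold tt
      exact Finset.sum_Ico_succ_top (by omega) _
    have e2 : W.tt c a (a + k + 1) = W.tt c a (a + 1) + W.tt c (a + 1) (a + k + 1) :=
      tt_add c W (by omega) (by omega)
    have e3 : W.tt c a (a + 1) = c (W.seq a) (W.seq (a + 1)) := tt_single c W a
    have e4 : W.tt c (a + 1) (a + 1 + k) = W.tt c (a + 1) (a + k + 1) := by
      rw [show a + 1 + k = a + k + 1 from by ring]
    rw [e4, hper1, hper2] at *
    linarith

lemma gap_le_duration (c : Fin n → Fin n → ℝ) (hc : ∀ u v : Fin n, u ≠ v → 0 < c u v)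
    (W : CWalk n k) (hk : 0 < k) {d : Fin n} {i j : ℕ}
    (hij : i < j) (hi : W.seq i = d)
    (hint : ∀ t, i < t → t < j → W.seq t ≠ d) :
    W.tt c i j ≤ W.duration c := by
  have hjk : j ≤ i + k := by
    by_contra h
    exact hint (i + k) (by omega) (by omega) (by rw [W.periodic]; exact hi)
  calc W.tt c i j ≤ W.tt c i (i + k) := tt_mono c hc W hjk
    _ = W.duration c := tt_window c W i

lemma tt_congr {k2 : ℕ} (c : Fin n → Fin n → ℝ) (W : CWalk n k) (W' : CWalk n k2)
    (a b : ℕ) : ∀ m, (∀ u ≤ m, W'.seq (a + u) = W.seq (b + u)) →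
    W'.tt c a (a + m) = W.tt c b (b + m) := by
  intro m
  induction m with
  | zero => intro _; simp [tt]
  | succ m ih =>
    intro h
    have e1 : W'.tt c a (a + (m + 1))
        = W'.tt c a (a + m) + c (W'.seq (a + m)) (W'.seq (a + m + 1)) := by
      unfold tt
      exact Finset.sum_Ico_succ_top (Nat.le_add_right a m) _
    have e2 : W.tt c b (b + (m + 1))
        = W.tt c b (b + m) + c (W.seq (b + m)) (W.seq (b + m + 1)) := by
      unfold tt
      exact Finset.sum_Ico_succ_top (Nat.le_add_right b m) _
    rw [e1, e2, ih (fun u hu => h u (by omega)), h m (by omega),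
      show a + m + 1 = a + (m + 1) from rfl, show b + m + 1 = b + (m + 1) from rfl,
      h (m + 1) le_rfl]

lemma exists_gap (W : CWalk n k) (hk : 0 < k) (d : Fin n) :
    ∃ i j, i < j ∧ W.seq i = d ∧ W.seq j = d ∧ (∀ t, i < t → t < j → W.seq t ≠ d) := by
  classical
  obtain ⟨i, hik, hid⟩ := W.covers d
  have hne : ∃ j, i < j ∧ W.seq j = d := ⟨i + k, by omega, by rw [W.periodic]; exact hid⟩
  refine ⟨i, Nat.find hne, (Nat.find_spec hne).1, hid, (Nat.find_spec hne).2, ?_⟩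
  intro t ht1 ht2 htd
  exact Nat.find_min hne ht2 ⟨ht1, htd⟩

lemma R_eq (c : Fin n → Fin n → ℝ) (W : CWalk n k) (hk : 0 < k) (B : ℝ)
    (hub : ∀ (d : Fin n) (i j : ℕ), i < j → W.seq i = d → W.seq j = d →
      (∀ t, i < t → t < j → W.seq t ≠ d) → W.tt c i j ≤ B)
    (hex : ∃ (d : Fin n) (i j : ℕ), i < j ∧ W.seq i = d ∧ W.seq j = d ∧
      (∀ t, i < t → t < j → W.seq t ≠ d) ∧ W.tt c i j = B) :
    W.R c = B := by
  have hRT_le : ∀ d, W.RT c d ≤ B := by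
    intro d
    apply csSup_le
    · obtain ⟨i, j, h1, h2, h3, h4⟩ := W.exists_gap hk d
      exact ⟨W.tt c i j, i, j, h1, h2, h3, h4, rfl⟩
    · rintro T ⟨i, j, h1, h2, h3, h4, rfl⟩
      exact hub d i j h1 h2 h3 h4
  obtain ⟨d0, i0, j0, h1, h2, h3, h4, h5⟩ := hex
  have hRT_ge : B ≤ W.RT c d0 := by
    have hbdd : BddAbove {T : ℝ | ∃ i j : ℕ, i < j ∧ W.seq i = d0 ∧ W.seq j = d0 ∧
        (∀ t, i < t → t < j → W.seq t ≠ d0) ∧ T = W.tt c i j} :=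
      ⟨B, by rintro T ⟨i, j, g1, g2, g3, g4, rfl⟩; exact hub d0 i j g1 g2 g3 g4⟩
    have hmem : B ∈ {T : ℝ | ∃ i j : ℕ, i < j ∧ W.seq i = d0 ∧ W.seq j = d0 ∧
        (∀ t, i < t → t < j → W.seq t ≠ d0) ∧ T = W.tt c i j} :=
      ⟨i0, j0, h1, h2, h3, h4, h5.symm⟩
    exact le_csSup hbdd hmem
  have hRT_eq : W.RT c d0 = B := le_antisymm (hRT_le d0) hRT_ge
  apply le_antisymm
  · have hne : {T : ℝ | ∃ d : Fin n, T = W.RT c d}.Nonempty := ⟨W.RT c d0, d0, rfl⟩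
    apply csSup_le hne
    rintro T ⟨d, rfl⟩
    exact hRT_le d
  · have hbdd : BddAbove {T : ℝ | ∃ d : Fin n, T = W.RT c d} :=
      ⟨B, by rintro T ⟨d, rfl⟩; exact hRT_le d⟩
    have hmem : W.RT c d0 ∈ {T : ℝ | ∃ d : Fin n, T = W.RT c d} := by
      exact ⟨d0, rfl⟩
    rw [← hRT_eq]
    exact le_csSup hbdd hmem

end CWalk

def scBody (q k s b : ℕ) : ℕ :=
  if b < q * k then b
  else q * k + ((b - q * k) / (k - 1)) * k + ((b - q * k) % (k - 1)) +
    (if s ≤ (b - q * k) % (k - 1) then 1 else 0)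

def scF (q k p s b : ℕ) : ℕ :=
  (b / (q * k + p * (k - 1))) * ((q + p) * k) + scBody q k s (b % (q * k + p * (k - 1)))

lemma modk (x y k : ℕ) (h : x < k) : (x + y * k) % k = x := by
  rw [Nat.add_mul_mod_self_right, Nat.mod_eq_of_lt h]

lemma scBody_lt (q k s b : ℕ) (h : b < q * k) : scBody q k s b = b := if_pos h

lemma scBody_decomp (q k s m r : ℕ) (hk : 2 ≤ k) (hr : r < k - 1) :
    scBody q k s (q * k + (m * (k - 1) + r))
      = q * k + m * k + r + (if s ≤ r then 1 else 0) := by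
  unfold scBody
  rw [if_neg (by omega)]
  have h1 : q * k + (m * (k - 1) + r) - q * k = r + (k - 1) * m := by
    have hcomm : (k - 1) * m = m * (k - 1) := Nat.mul_comm _ _
    omega
  rw [h1, Nat.add_mul_div_left _ _ (by omega : 0 < k - 1), Nat.div_eq_of_lt hr,
    Nat.add_mul_mod_self_left, Nat.mod_eq_of_lt hr]
  by_cases hsr : s ≤ r <;> simp [hsr] <;> omega

lemma scBody_succ (q k p s : ℕ) (hk : 3 ≤ k) (hq : 1 ≤ q) (hs : s < k) (b : ℕ)
    (hb : b + 1 < q * k + p * (k - 1)) :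
    scBody q k s (b + 1) = scBody q k s b + 1 ∨
    (scBody q k s (b + 1) = scBody q k s b + 2 ∧ (scBody q k s b + 1) % k = s) := by
  by_cases h1 : b + 1 < q * k
  · left
    rw [scBody_lt q k s (b + 1) h1, scBody_lt q k s b (by omega)]
  by_cases h2 : b + 1 = q * k
  · rw [scBody_lt q k s b (by omega), h2,
      show (q * k : ℕ) = q * k + (0 * (k - 1) + 0) from by ring,
      scBody_decomp q k s 0 0 (by omega) (by omega)]
    by_cases hs0 : s = 0
    · right
      rw [if_pos (by omega)]
      refine ⟨by omega, ?_⟩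
      rw [show q * k + (0 * (k - 1) + 0) = 0 + q * k from by ring,
        modk _ _ _ (by omega)]
      omega
    · left
      rw [if_neg (by omega)]
      omega
  · have hbq : q * k ≤ b := by omega
    have hr : (b - q * k) % (k - 1) < k - 1 := Nat.mod_lt _ (by omega)
    have hdm := Nat.div_add_mod (b - q * k) (k - 1)
    set m := (b - q * k) / (k - 1) with hm
    set r := (b - q * k) % (k - 1) with hrdef
    have hcomm : (k - 1) * m = m * (k - 1) := Nat.mul_comm _ _
    have hb' : b = q * k + (m * (k - 1) + r) := by omega
    by_cases hr1 : r + 1 < k - 1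
    · have hb1' : b + 1 = q * k + (m * (k - 1) + (r + 1)) := by omega
      rw [hb1', hb']
      rw [scBody_decomp q k s m r (by omega) hr,
        scBody_decomp q k s m (r + 1) (by omega) hr1]
      by_cases hA : s ≤ r
      · left; rw [if_pos hA, if_pos (by omega)]; omega
      · by_cases hB : s = r + 1
        · right
          rw [if_neg hA, if_pos (by omega)]
          refine ⟨by omega, ?_⟩
          rw [show q * k + m * k + r + 0 + 1 = (r + 1) + (q + m) * k from by ring,
            modk _ _ _ (by omega)]
          omega
        · left; rw [if_neg hA, if_neg (by omega)]; omega
    · have hr2 : r + 1 = k - 1 := by omega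
      have e2 : (m + 1) * (k - 1) = m * (k - 1) + (k - 1) := by ring
      have e3 : (m + 1) * k = m * k + k := by ring
      have hb1' : b + 1 = q * k + ((m + 1) * (k - 1) + 0) := by omega
      rw [hb1', hb']
      rw [scBody_decomp q k s m r (by omega) hr,
        scBody_decomp q k s (m + 1) 0 (by omega) (by omega)]
      by_cases hs0 : s = 0
      · right
        rw [if_pos (by omega), if_pos (by omega)]
        refine ⟨by omega, ?_⟩
        have hkr : k = r + 2 := by omega
        rw [show q * k + m * k + r + 1 + 1 = 0 + (q + m + 1) * k from by rw [hkr]; ring,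
          modk _ _ _ (by omega)]
        omega
      · by_cases hsk : s ≤ k - 2
        · left
          rw [if_neg (by omega : ¬ s ≤ 0), if_pos (by omega : s ≤ r)]
          omega
        · right
          rw [if_neg (by omega), if_neg (by omega)]
          refine ⟨by omega, ?_⟩
          rw [show q * k + m * k + r + 0 + 1 = (r + 1) + (q + m) * k from by ring,
            modk _ _ _ (by omega)]
          omega

lemma scBody_wrap (q k p s : ℕ) (hk : 3 ≤ k) (hq : 1 ≤ q) (hs : s < k) :
    scBody q k s (q * k + p * (k - 1) - 1) + 1 = (q + p) * k ∨
    (scBody q k s (q * k + p * (k - 1) - 1) + 2 = (q + p) * k ∧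
      (scBody q k s (q * k + p * (k - 1) - 1) + 1) % k = s) := by
  have hqk : 0 < q * k := Nat.mul_pos (by omega) (by omega)
  rcases Nat.eq_zero_or_pos p with hp | hp
  · subst hp
    left
    rw [show q * k + 0 * (k - 1) - 1 = q * k - 1 from by omega,
      scBody_lt q k s (q * k - 1) (by omega)]
    have e : (q + 0) * k = q * k := by ring
    omega
  · obtain ⟨p', rfl⟩ : ∃ p', p = p' + 1 := ⟨p - 1, by omega⟩
    have e1 : (p' + 1) * (k - 1) = p' * (k - 1) + (k - 1) := by ring
    have hK1 : q * k + (p' + 1) * (k - 1) - 1 = q * k + (p' * (k - 1) + (k - 2)) := by omega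
    rw [hK1, scBody_decomp q k s p' (k - 2) (by omega) (by omega)]
    have e2 : (q + (p' + 1)) * k = q * k + p' * k + k := by ring
    by_cases hsk : s ≤ k - 2
    · left
      rw [if_pos hsk]
      omega
    · right
      rw [if_neg hsk]
      refine ⟨by omega, ?_⟩
      rw [show q * k + p' * k + (k - 2) + 0 + 1 = (k - 1) + (q + p') * k from by
          have e3 : (q + p') * k = q * k + p' * k := by ring
          omega,
        modk _ _ _ (by omega)]
      omega

lemma scF_succ (q k p s : ℕ) (hk : 3 ≤ k) (hq : 1 ≤ q) (hs : s < k) (i : ℕ) :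
    scF q k p s (i + 1) = scF q k p s i + 1 ∨
    (scF q k p s (i + 1) = scF q k p s i + 2 ∧ (scF q k p s i + 1) % k = s) := by
  have hqk : 0 < q * k := Nat.mul_pos (by omega) (by omega)
  have hK : 0 < q * k + p * (k - 1) := by omega
  have hdm := Nat.div_add_mod i (q * k + p * (k - 1))
  have hmlt : i % (q * k + p * (k - 1)) < q * k + p * (k - 1) := Nat.mod_lt _ hK
  unfold scF
  by_cases hb : i % (q * k + p * (k - 1)) + 1 < q * k + p * (k - 1)
  · have e0 : i + 1 = (i % (q * k + p * (k - 1)) + 1)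
        + (i / (q * k + p * (k - 1))) * (q * k + p * (k - 1)) := by
      have hcm : (q * k + p * (k - 1)) * (i / (q * k + p * (k - 1)))
          = (i / (q * k + p * (k - 1))) * (q * k + p * (k - 1)) := Nat.mul_comm _ _
      omega
    have e1 : (i + 1) % (q * k + p * (k - 1)) = i % (q * k + p * (k - 1)) + 1 := by
      rw [e0, Nat.add_mul_mod_self_right, Nat.mod_eq_of_lt hb]
    have e2 : (i + 1) / (q * k + p * (k - 1)) = i / (q * k + p * (k - 1)) := by
      rw [e0, Nat.add_mul_div_right _ _ hK, Nat.div_eq_of_lt hb]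
      omega
    rw [e1, e2]
    rcases scBody_succ q k p s hk hq hs (i % (q * k + p * (k - 1))) hb with h | ⟨h, hres⟩
    · left; omega
    · right
      refine ⟨by omega, ?_⟩
      rw [show (i / (q * k + p * (k - 1))) * ((q + p) * k)
            + scBody q k s (i % (q * k + p * (k - 1))) + 1
          = (scBody q k s (i % (q * k + p * (k - 1))) + 1)
            + ((i / (q * k + p * (k - 1))) * (q + p)) * k from by ring,
        Nat.add_mul_mod_self_right]
      exact hres
  · have hb2 : i % (q * k + p * (k - 1)) = q * k + p * (k - 1) - 1 := by omega
    have e0 : i + 1 = 0 + ((i / (q * k + p * (k - 1))) + 1) * (q * k + p * (k - 1)) := by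
      have h1 : ((i / (q * k + p * (k - 1))) + 1) * (q * k + p * (k - 1))
          = (i / (q * k + p * (k - 1))) * (q * k + p * (k - 1)) + (q * k + p * (k - 1)) := by ring
      have h2 : (q * k + p * (k - 1)) * (i / (q * k + p * (k - 1)))
          = (i / (q * k + p * (k - 1))) * (q * k + p * (k - 1)) := Nat.mul_comm _ _
      omega
    have e1 : (i + 1) % (q * k + p * (k - 1)) = 0 := by
      rw [e0, Nat.add_mul_mod_self_right, Nat.zero_mod]
    have e2 : (i + 1) / (q * k + p * (k - 1)) = i / (q * k + p * (k - 1)) + 1 := by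
      rw [e0, Nat.add_mul_div_right _ _ hK, Nat.zero_div, Nat.zero_add]
    rw [e1, e2, hb2, scBody_lt q k s 0 hqk]
    have e3 : ((i / (q * k + p * (k - 1))) + 1) * ((q + p) * k)
        = (i / (q * k + p * (k - 1))) * ((q + p) * k) + (q + p) * k := by ring
    rcases scBody_wrap q k p s hk hq hs with h | ⟨h, hres⟩
    · left; omega
    · right
      refine ⟨by omega, ?_⟩
      rw [show (i / (q * k + p * (k - 1))) * ((q + p) * k)
            + scBody q k s (q * k + p * (k - 1) - 1) + 1
          = (scBody q k s (q * k + p * (k - 1) - 1) + 1)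
            + ((i / (q * k + p * (k - 1))) * (q + p)) * k from by ring,
        Nat.add_mul_mod_self_right]
      exact hres

lemma scF_seq (n k q p s : ℕ) (hk : 3 ≤ k) (hq : 1 ≤ q) (hs : s < k)
    (Wk : CWalk n k) (Wk1 : CWalk n (k - 1)) (Wbar : CWalk n (q * k + p * (k - 1)))
    (hsc1 : ∀ j < s, Wk1.seq j = Wk.seq j)
    (hsc2 : ∀ j, s ≤ j → j < k - 1 → Wk1.seq j = Wk.seq (j + 1))
    (hb1 : ∀ i < q * k, Wbar.seq i = Wk.seq (i % k))
    (hb2 : ∀ j < p * (k - 1), Wbar.seq (q * k + j) = Wk1.seq (j % (k - 1))) :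
    ∀ i, Wbar.seq i = Wk.seq (scF q k p s i) := by
  have hqk : 0 < q * k := Nat.mul_pos (by omega) (by omega)
  have hK : 0 < q * k + p * (k - 1) := by omega
  have hbody : ∀ b, b < q * k + p * (k - 1) → Wbar.seq b = Wk.seq (scBody q k s b) := by
    intro b hbK
    by_cases h1 : b < q * k
    · rw [scBody_lt q k s b h1, hb1 b h1]
      exact (Wk.seq_mod b).symm
    · push_neg at h1
      have hjp : b - q * k < p * (k - 1) := by omega
      have hdm := Nat.div_add_mod (b - q * k) (k - 1)
      have hr : (b - q * k) % (k - 1) < k - 1 := Nat.mod_lt _ (by omega)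
      set m := (b - q * k) / (k - 1) with hm
      set r := (b - q * k) % (k - 1) with hrdef
      have hcomm : (k - 1) * m = m * (k - 1) := Nat.mul_comm _ _
      have hb' : b = q * k + (m * (k - 1) + r) := by omega
      rw [hb', scBody_decomp q k s m r (by omega) hr,
        hb2 (m * (k - 1) + r) (by omega),
        show m * (k - 1) + r = r + (k - 1) * m from by ring,
        Nat.add_mul_mod_self_left, Nat.mod_eq_of_lt hr]
      by_cases hsr : s ≤ r
      · rw [if_pos hsr, hsc2 r hsr hr,
          show q * k + m * k + r + 1 = (r + 1) + (q + m) * k from by ring]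
        exact (Wk.seq_add_mul _ _).symm
      · rw [if_neg hsr, hsc1 r (by omega),
          show q * k + m * k + r + 0 = r + (q + m) * k from by ring]
        exact (Wk.seq_add_mul _ _).symm
  intro i
  rw [Wbar.seq_mod i, hbody _ (Nat.mod_lt _ hK)]
  unfold scF
  rw [show (i / (q * k + p * (k - 1))) * ((q + p) * k)
        + scBody q k s (i % (q * k + p * (k - 1)))
      = scBody q k s (i % (q * k + p * (k - 1)))
        + ((i / (q * k + p * (k - 1))) * (q + p)) * k from by ring]
  exact (Wk.seq_add_mul _ _).symm


/-- concatenating `q ≥ 1` copies of an optimal walk `W*(k)`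
(`n+1 ≤ k ≤ 2n-1`) with `p ≥ 0` copies of a shortcut walk `W(k-1)` of `W*(k)`
yields a walk whose revisit time equals `R(W*(k))`. -/
theorem concat_optimal_with_shortcut
    (n k q p : ℕ) (hn : 2 ≤ n) (hk1 : n + 1 ≤ k) (hk2 : k ≤ 2 * n - 1) (hq : 1 ≤ q)
    (c : Fin n → Fin n → ℝ)
    (hc : ∀ u v : Fin n, u ≠ v → 0 < c u v)
    (htri : ∀ u v w : Fin n, c u w ≤ c u v + c v w)
    (Wk : CWalk n k) (hopt : Wk.R c = Rstar n c k)
    -- `W(k-1)` is obtained by shortcutting the revisit at position `s`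
    (s : ℕ) (hs : s < k)
    (hmulti : ∃ t < k, t ≠ s ∧ Wk.seq t = Wk.seq s)
    (Wk1 : CWalk n (k - 1))
    (hsc1 : ∀ j < s, Wk1.seq j = Wk.seq j)
    (hsc2 : ∀ j, s ≤ j → j < k - 1 → Wk1.seq j = Wk.seq (j + 1))
    -- `W̄` is `q` copies of `W*(k)` followed by `p` copies of `W(k-1)`
    (Wbar : CWalk n (q * k + p * (k - 1)))
    (hb1 : ∀ i < q * k, Wbar.seq i = Wk.seq (i % k))
    (hb2 : ∀ j < p * (k - 1), Wbar.seq (q * k + j) = Wk1.seq (j % (k - 1))) :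
    Wbar.R c = Wk.R c := by
  classical
  have hk3 : 3 ≤ k := by omega
  have hk0 : 0 < k := by omega
  have hqk : 0 < q * k := Nat.mul_pos (by omega) (by omega)
  have hK : 0 < q * k + p * (k - 1) := by omega
  -- pigeonhole: a target visited exactly once per period of Wk
  obtain ⟨dh, i0, hi0k, hi0, huniq0⟩ :
      ∃ (dh : Fin n) (i0 : ℕ), i0 < k ∧ Wk.seq i0 = dh ∧
        ∀ t, t < k → Wk.seq t = dh → t = i0 := by
    by_contra hcon
    push_neg at hcon
    have hcard : ∀ d : Fin n,
        2 ≤ ((Finset.range k).filter (fun i => Wk.seq i = d)).card := by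
      intro d
      obtain ⟨i, hik, hid⟩ := Wk.covers d
      have hmem : i ∈ (Finset.range k).filter (fun i => Wk.seq i = d) :=
        Finset.mem_filter.2 ⟨Finset.mem_range.2 hik, hid⟩
      by_contra hlt
      push_neg at hlt
      have h1 : 0 < ((Finset.range k).filter (fun i => Wk.seq i = d)).card :=
        Finset.card_pos.2 ⟨i, hmem⟩
      have h2 : ((Finset.range k).filter (fun i => Wk.seq i = d)).card = 1 := by omega
      obtain ⟨a, ha⟩ := Finset.card_eq_one.1 h2
      have hak : a < k ∧ Wk.seq a = d := by
        have h3 : a ∈ (Finset.range k).filter (fun i => Wk.seq i = d) := by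
          rw [ha]; exact Finset.mem_singleton_self a
        rw [Finset.mem_filter, Finset.mem_range] at h3
        exact h3
      obtain ⟨t, htk, htd, htne⟩ := hcon d a hak.1 hak.2
      have h4 : t ∈ (Finset.range k).filter (fun i => Wk.seq i = d) :=
        Finset.mem_filter.2 ⟨Finset.mem_range.2 htk, htd⟩
      rw [ha, Finset.mem_singleton] at h4
      exact htne h4
    have hsum : k = ∑ d : Fin n, ((Finset.range k).filter (fun i => Wk.seq i = d)).card := by
      have h := Finset.card_eq_sum_card_fiberwise
        (f := fun i => Wk.seq i) (s := Finset.range k) (t := Finset.univ)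
        (fun x _ => Finset.mem_univ _)
      simpa using h
    have h2n : 2 * n ≤ k := by
      rw [hsum]
      calc 2 * n = ∑ _d : Fin n, 2 := by
            simp [Finset.sum_const, Finset.card_univ, Nat.mul_comm]
        _ ≤ _ := Finset.sum_le_sum (fun d _ => hcard d)
    omega
  have huniq : ∀ t, Wk.seq t = dh → t % k = i0 := by
    intro t ht
    exact huniq0 (t % k) (Nat.mod_lt _ hk0) (by rw [← Wk.seq_mod]; exact ht)
  have hi0s : i0 ≠ s := by
    intro h
    obtain ⟨t, htk, hts, htv⟩ := hmulti
    have h5 : t = i0 := huniq0 t htk (by rw [htv, ← h]; exact hi0)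
    exact hts (h5.trans h)
  have hocc : ∀ d : Fin n, ∃ r, r < k ∧ Wk.seq r = d ∧ r ≠ s := by
    intro d
    by_cases hd : Wk.seq s = d
    · obtain ⟨t, htk, hts, htv⟩ := hmulti
      exact ⟨t, htk, htv.trans hd, hts⟩
    · obtain ⟨r, hrk, hrv⟩ := Wk.covers d
      exact ⟨r, hrk, hrv, fun h => hd (h ▸ hrv)⟩
  -- R(Wk) = duration(Wk)
  have hRk : Wk.R c = Wk.duration c := by
    apply CWalk.R_eq c Wk hk0
    · intro d i j h1 h2 h3 h4
      exact CWalk.gap_le_duration c hc Wk hk0 h1 h2 h4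
    · refine ⟨dh, i0, i0 + k, by omega, hi0, by rw [Wk.periodic]; exact hi0, ?_, ?_⟩
      · intro t ht1 ht2 htd
        have hm := huniq t htd
        have hdm := Nat.div_add_mod t k
        rcases Nat.eq_zero_or_pos (t / k) with h0 | h0
        · rw [h0, Nat.mul_zero] at hdm; omega
        · have h5 := Nat.le_mul_of_pos_right k h0
          omega
      · exact CWalk.tt_window c Wk i0
  -- machinery for Wbar
  have hFseq : ∀ i, Wbar.seq i = Wk.seq (scF q k p s i) :=
    scF_seq n k q p s hk3 hq hs Wk Wk1 Wbar hsc1 hsc2 hb1 hb2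
  have hFsucc := scF_succ q k p s hk3 hq hs
  have hFstep : ∀ t, scF q k p s t < scF q k p s (t + 1) := by
    intro t; rcases hFsucc t with h | ⟨h, _⟩ <;> omega
  have hFmono : StrictMono (scF q k p s) := strictMono_nat_of_lt_succ hFstep
  have hhit : ∀ jj i m2, i ≤ jj → scF q k p s i ≤ m2 → m2 ≤ scF q k p s jj →
      (∃ t, i ≤ t ∧ t ≤ jj ∧ scF q k p s t = m2) ∨ m2 % k = s := by
    intro jj
    induction jj with
    | zero =>
      intro i m2 h1 h2 h3
      left
      refine ⟨0, by omega, le_rfl, ?_⟩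
      have h4 : i = 0 := by omega
      subst h4
      omega
    | succ jj ih =>
      intro i m2 h1 h2 h3
      by_cases hij : i = jj + 1
      · subst hij
        left; exact ⟨jj + 1, le_rfl, le_rfl, by omega⟩
      · by_cases hm : m2 ≤ scF q k p s jj
        · rcases ih i m2 (by omega) h2 hm with ⟨t, a1, b1, c1⟩ | h
          · exact Or.inl ⟨t, a1, by omega, c1⟩
          · exact Or.inr h
        · push_neg at hm
          rcases hFsucc jj with h | ⟨h, hres⟩
          · left; exact ⟨jj + 1, by omega, le_rfl, by omega⟩
          · rcases (by omega : m2 = scF q k p s jj + 1 ∨ m2 = scF q k p s (jj + 1)) with hm1 | hm2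
            · right; rw [hm1]; exact hres
            · left; exact ⟨jj + 1, by omega, le_rfl, hm2.symm⟩
  have hcomp : ∀ i j, i ≤ j → Wbar.tt c i j ≤ Wk.tt c (scF q k p s i) (scF q k p s j) := by
    intro i j hij
    induction j, hij using Nat.le_induction with
    | base => unfold CWalk.tt; simp
    | succ j hij ih =>
      have hdec : Wbar.tt c i (j + 1) = Wbar.tt c i j + c (Wbar.seq j) (Wbar.seq (j + 1)) := by
        unfold CWalk.tt
        exact Finset.sum_Ico_succ_top (by omega) _
      have hmle : scF q k p s i ≤ scF q k p s j := hFmono.monotone hij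
      rcases hFsucc j with h | ⟨h, _⟩
      · have hdec2 : Wk.tt c (scF q k p s i) (scF q k p s (j + 1))
            = Wk.tt c (scF q k p s i) (scF q k p s j)
              + c (Wk.seq (scF q k p s j)) (Wk.seq (scF q k p s j + 1)) := by
          rw [h]
          unfold CWalk.tt
          exact Finset.sum_Ico_succ_top (by omega) _
        have heq : c (Wbar.seq j) (Wbar.seq (j + 1))
            = c (Wk.seq (scF q k p s j)) (Wk.seq (scF q k p s j + 1)) := by
          rw [hFseq j, hFseq (j + 1), h]
        rw [hdec, hdec2]
        linarith
      · have hdec2 : Wk.tt c (scF q k p s i) (scF q k p s (j + 1))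
            = Wk.tt c (scF q k p s i) (scF q k p s j)
              + (c (Wk.seq (scF q k p s j)) (Wk.seq (scF q k p s j + 1))
                + c (Wk.seq (scF q k p s j + 1)) (Wk.seq (scF q k p s j + 1 + 1))) := by
          rw [h]
          unfold CWalk.tt
          rw [show scF q k p s j + 2 = (scF q k p s j + 1) + 1 from rfl,
            Finset.sum_Ico_succ_top (by omega), Finset.sum_Ico_succ_top (by omega)]
          ring
        have htr : c (Wbar.seq j) (Wbar.seq (j + 1))
            ≤ c (Wk.seq (scF q k p s j)) (Wk.seq (scF q k p s j + 1))
              + c (Wk.seq (scF q k p s j + 1)) (Wk.seq (scF q k p s j + 1 + 1)) := by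
          rw [hFseq j, hFseq (j + 1), h,
            show scF q k p s j + 2 = scF q k p s j + 1 + 1 from rfl]
          exact htri _ _ _
        rw [hdec, hdec2]
        linarith
  -- every gap of Wbar is at most duration(Wk)
  have hub : ∀ (d : Fin n) (i j : ℕ), i < j → Wbar.seq i = d → Wbar.seq j = d →
      (∀ t, i < t → t < j → Wbar.seq t ≠ d) → Wbar.tt c i j ≤ Wk.duration c := by
    intro d i j h1 h2 h3 h4
    have hFj : scF q k p s j ≤ scF q k p s i + k := by
      by_contra hcon
      push_neg at hcon
      obtain ⟨r, hrk, hrd, hrs⟩ := hocc d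
      have hdm := Nat.div_add_mod (scF q k p s i) k
      have hcm : k * (scF q k p s i / k) = (scF q k p s i / k) * k := Nat.mul_comm _ _
      have hmod : scF q k p s i % k < k := Nat.mod_lt _ hk0
      -- choose w ≡ r (mod k) in (scF i, scF i + k]
      have hw : ∃ w, scF q k p s i < w ∧ w ≤ scF q k p s i + k ∧ w % k = r := by
        by_cases hcase : scF q k p s i % k < r
        · exact ⟨r + (scF q k p s i / k) * k, by omega, by omega, modk r _ k hrk⟩
        · exact ⟨r + ((scF q k p s i / k) + 1) * k,
            by have e : ((scF q k p s i / k) + 1) * k = (scF q k p s i / k) * k + k := by ring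
               omega,
            by have e : ((scF q k p s i / k) + 1) * k = (scF q k p s i / k) * k + k := by ring
               omega,
            modk r _ k hrk⟩
      obtain ⟨w, hw1, hw2, hw3⟩ := hw
      rcases hhit j i w h1.le (by omega) (by omega) with ⟨t, ht1, ht2, htF⟩ | hws
      · have hti : i < t := by
          rcases Nat.lt_or_ge i t with h | h
          · exact h
          · have h5 : t = i := by omega
            rw [h5] at htF
            omega
        have htj : t < j := by
          rcases Nat.lt_or_ge t j with h | h
          · exact h
          · have hge : scF q k p s j ≤ scF q k p s t := hFmono.monotone h
            omega
        have hval : Wbar.seq t = d := by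
          rw [hFseq t, htF, Wk.seq_mod w, hw3]
          exact hrd
        exact h4 t hti htj hval
      · exact hrs (by rw [← hw3]; exact hws)
    calc Wbar.tt c i j ≤ Wk.tt c (scF q k p s i) (scF q k p s j) := hcomp i j h1.le
      _ ≤ Wk.tt c (scF q k p s i) (scF q k p s i + k) := CWalk.tt_mono c hc Wk hFj
      _ = Wk.duration c := CWalk.tt_window c Wk _
  -- a gap of Wbar realizing duration(Wk)
  have hwit : ∃ a, ∀ u ≤ k, Wbar.seq (a + u) = Wk.seq (i0 + u) := by
    rcases Nat.lt_or_ge q 2 with hq2 | hq2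
    · have hq1 : q = 1 := by omega
      subst hq1
      rcases Nat.eq_zero_or_pos p with hp0 | hp1
      · subst hp0
        refine ⟨i0, fun u hu => ?_⟩
        have hx := Wbar.seq_mod (i0 + u)
        have hmod : (i0 + u) % (1 * k + 0 * (k - 1)) = (i0 + u) % k := by
          norm_num
        rw [hx, hmod, hb1 ((i0 + u) % k) (by have := Nat.mod_lt (i0 + u) hk0; omega),
          Nat.mod_eq_of_lt (Nat.mod_lt _ hk0), ← Wk.seq_mod]
      · rcases Nat.lt_or_ge i0 s with hi0lt | hi0ge
        · refine ⟨i0, fun u hu => ?_⟩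
          rcases Nat.lt_or_ge (i0 + u) k with hx | hx
          · rw [hb1 _ (by omega), ← Wk.seq_mod]
          · have hrr : i0 + u = 1 * k + (i0 + u - k) := by omega
            have hle : k - 1 ≤ p * (k - 1) := Nat.le_mul_of_pos_left _ hp1
            rw [hrr, hb2 _ (by omega), Nat.mod_eq_of_lt (by omega : i0 + u - k < k - 1),
              hsc1 _ (by omega), show 1 * k + (i0 + u - k) = (i0 + u - k) + k from by ring]
            exact (Wk.periodic _).symm
        · have hsi0 : s < i0 := by omega
          obtain ⟨p', rfl⟩ : ∃ p', p = p' + 1 := ⟨p - 1, by omega⟩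
          have e1 : (p' + 1) * (k - 1) = p' * (k - 1) + (k - 1) := by ring
          refine ⟨(p' + 1) * (k - 1) + i0, fun u hu => ?_⟩
          rcases Nat.lt_or_ge (i0 + u) k with hx | hx
          · have hz : (p' + 1) * (k - 1) + i0 + u = 1 * k + (p' * (k - 1) + (i0 + u - 1)) := by
              omega
            rw [hz, hb2 _ (by omega : p' * (k - 1) + (i0 + u - 1) < (p' + 1) * (k - 1)),
              show p' * (k - 1) + (i0 + u - 1) = (i0 + u - 1) + (k - 1) * p' from by ring,
              Nat.add_mul_mod_self_left, Nat.mod_eq_of_lt (by omega : i0 + u - 1 < k - 1),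
              hsc2 _ (by omega) (by omega), show i0 + u - 1 + 1 = i0 + u from by omega]
          · have hz : (p' + 1) * (k - 1) + i0 + u
                = (i0 + u - k) + (1 * k + (p' + 1) * (k - 1)) := by omega
            have hL : Wbar.seq ((p' + 1) * (k - 1) + i0 + u) = Wk.seq (i0 + u - k) := by
              rw [hz, Wbar.periodic, hb1 _ (by omega : i0 + u - k < 1 * k),
                Nat.mod_eq_of_lt (by omega)]
            have hR : Wk.seq (i0 + u) = Wk.seq (i0 + u - k) := by
              conv_lhs => rw [show i0 + u = (i0 + u - k) + k from by omega, Wk.periodic]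
            rw [hL, hR]
    · refine ⟨i0, fun u hu => ?_⟩
      have hlt : i0 + u < q * k := by
        have h2k : 2 * k ≤ q * k := Nat.mul_le_mul_right k hq2
        omega
      rw [hb1 _ hlt, ← Wk.seq_mod]
  -- R(Wbar) = duration(Wk)
  have hRb : Wbar.R c = Wk.duration c := by
    apply CWalk.R_eq c Wbar hK
    · exact hub
    · obtain ⟨a, ha⟩ := hwit
      refine ⟨dh, a, a + k, by omega, ?_, ?_, ?_, ?_⟩
      · have h5 := ha 0 (by omega)
        rw [Nat.add_zero, Nat.add_zero] at h5
        rw [h5]; exact hi0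
      · rw [ha k le_rfl, Wk.periodic]; exact hi0
      · intro t ht1 ht2 htd
        have hu : t = a + (t - a) := by omega
        rw [hu, ha (t - a) (by omega)] at htd
        have hm := huniq _ htd
        have hdm := Nat.div_add_mod (i0 + (t - a)) k
        rcases Nat.eq_zero_or_pos ((i0 + (t - a)) / k) with h0 | h0
        · rw [h0, Nat.mul_zero] at hdm; omega
        · have h5 := Nat.le_mul_of_pos_right k h0
          omega
      · rw [CWalk.tt_congr c Wk Wbar a i0 k (fun u hu => ha u hu)]
        exact CWalk.tt_window c Wk i0
  rw [hRb, hRk]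
end

section
/- If k > n² − n and k is not an integral multiple of n, then R*(k) ≤ R*(n+1). -/
namespace RSAux

def skipP (P r p q x : ℕ) : Prop := x % P = r ∧ q ≤ x / P % p

instance (P r p q x : ℕ) : Decidable (skipP P r p q x) := by
  unfold skipP; infer_instance

def phiP (P r p q : ℕ) : ℕ → ℕ
  | 0 => 0
  | i+1 => if skipP P r p q (phiP P r p q i + 1) then phiP P r p q i + 2 else phiP P r p q i + 1

variable {P r p q : ℕ}

lemma phi_key (i : ℕ) :
    (phiP P r p q (i+1) = phiP P r p q i + 1 ∧ ¬ skipP P r p q (phiP P r p q i + 1)) ∨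
    (phiP P r p q (i+1) = phiP P r p q i + 2 ∧ skipP P r p q (phiP P r p q i + 1)) := by
  by_cases h : skipP P r p q (phiP P r p q i + 1)
  · right; exact ⟨by simp [phiP, if_pos h], h⟩
  · left; exact ⟨by simp [phiP, if_neg h], h⟩

lemma phi_mono : StrictMono (phiP P r p q) := by
  apply strictMono_nat_of_lt_succ
  intro i
  rcases phi_key (P := P) (r := r) (p := p) (q := q) i with ⟨h, _⟩ | ⟨h, _⟩ <;> omega

lemma phi_step_le (i : ℕ) : phiP P r p q (i+1) ≤ phiP P r p q i + 2 := by
  rcases phi_key (P := P) (r := r) (p := p) (q := q) i with ⟨h, _⟩ | ⟨h, _⟩ <;> omega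

lemma phi_lt_succ (i : ℕ) : phiP P r p q i < phiP P r p q (i+1) := by
  rcases phi_key (P := P) (r := r) (p := p) (q := q) i with ⟨h, _⟩ | ⟨h, _⟩ <;> omega

/-- every m is in a gap -/
lemma phi_window (m : ℕ) : ∃ i, phiP P r p q i ≤ m ∧ m < phiP P r p q (i+1) := by
  induction m with
  | zero =>
    refine ⟨0, le_of_eq rfl, ?_⟩
    have := phi_lt_succ (P := P) (r := r) (p := p) (q := q) 0
    simpa [phiP] using this
  | succ m ih =>
    obtain ⟨i, h1, h2⟩ := ih
    by_cases h : m + 1 < phiP P r p q (i+1)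
    · exact ⟨i, by omega, h⟩
    · have he : phiP P r p q (i+1) = m + 1 := by omega
      have := phi_lt_succ (P := P) (r := r) (p := p) (q := q) (i+1)
      exact ⟨i+1, by omega, by omega⟩

lemma phi_kept (hr : 1 ≤ r) (m : ℕ) (hm : ¬ skipP P r p q m) : ∃ i, phiP P r p q i = m := by
  obtain ⟨i, h1, h2⟩ := phi_window (P := P) (r := r) (p := p) (q := q) m
  rcases eq_or_lt_of_le h1 with h | h
  · exact ⟨i, h⟩
  · rcases phi_key (P := P) (r := r) (p := p) (q := q) i with ⟨hk, _⟩ | ⟨hk, hs⟩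
    · omega
    · have : m = phiP P r p q i + 1 := by omega
      exact absurd (this ▸ hs) hm

def ScP (P r p q m : ℕ) : ℕ := ((Finset.range m).filter (fun x => skipP P r p q x)).card

lemma Sc_succ (m : ℕ) :
    ScP P r p q (m+1) = ScP P r p q m + (if skipP P r p q m then 1 else 0) := by
  unfold ScP
  rw [Finset.range_add_one, Finset.filter_insert]
  split
  · rw [Finset.card_insert_of_notMem (by simp)]
  · simp

lemma mod_succ_ne (hr : 1 ≤ r) (hrP : r < P) (x : ℕ) (h : x % P = r) : (x+1) % P ≠ r := by
  have hd := Nat.div_add_mod x P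
  have hx1 : x + 1 = P * (x / P) + (r + 1) := by omega
  have : (x+1) % P = (r+1) % P := by rw [hx1, Nat.mul_add_mod]
  rw [this]
  rcases Nat.lt_or_ge (r+1) P with h1 | h1
  · rw [Nat.mod_eq_of_lt h1]; omega
  · have : r + 1 = P := by omega
    rw [this, Nat.mod_self]; omega

lemma phi_eq_add_Sc (hP : 2 ≤ P) (hr : 1 ≤ r) (i : ℕ) :
    phiP P r p q i = i + ScP P r p q (phiP P r p q i) ∧ ¬ skipP P r p q (phiP P r p q i) := by
  induction i with
  | zero =>
    constructor
    · simp [phiP, ScP]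
    · simp [phiP, skipP]; intro h; omega
  | succ i ih =>
    obtain ⟨ih1, ih2⟩ := ih
    rcases phi_key (P := P) (r := r) (p := p) (q := q) i with ⟨hk, hs⟩ | ⟨hk, hs⟩
    · constructor
      · rw [hk, Sc_succ, if_neg ih2]; omega
      · rw [hk]; exact hs
    · constructor
      · rw [hk]
        have h1 : ScP P r p q (phiP P r p q i + 2)
            = ScP P r p q (phiP P r p q i) + 1 := by
          rw [Sc_succ, Sc_succ, if_neg ih2, if_pos hs]
        omega
      · rw [hk]
        intro ⟨h1, _⟩
        obtain ⟨h2, _⟩ := hs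
        have hrP : r < P := by
          have := Nat.mod_lt (phiP P r p q i + 1) (show 0 < P by omega)
          omega
        exact mod_succ_ne hr hrP _ h2 h1

lemma Sc_mono_lemma (x y : ℕ) (hxy : x < y) (hx : ¬ skipP P r p q x) :
    x + ScP P r p q y < y + ScP P r p q x := by
  have h1 : ScP P r p q y = ScP P r p q x + ((Finset.Ico x y).filter (fun t => skipP P r p q t)).card := by
    unfold ScP
    rw [← Finset.card_union_of_disjoint, ← Finset.filter_union]
    · congr 1
      rw [Finset.range_eq_Ico, Finset.range_eq_Ico, Finset.Ico_union_Ico_eq_Ico (by omega) (by omega)]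
    · exact Finset.disjoint_filter_filter (by simp [Finset.disjoint_left]; omega)
  have h2 : ((Finset.Ico x y).filter (fun t => skipP P r p q t)).card
      ≤ ((Finset.Ico x y).erase x).card := by
    apply Finset.card_le_card
    intro t ht
    simp only [Finset.mem_filter, Finset.mem_Ico] at ht
    apply Finset.mem_erase.2
    refine ⟨?_, by simp [Finset.mem_Ico]; omega⟩
    rintro rfl; exact hx ht.2
  rw [Finset.card_erase_of_mem (by simp [Finset.mem_Ico]; omega), Nat.card_Ico] at h2
  omega

lemma Sc_pP (hr : 1 ≤ r) (hrP : r < P) (hqp : q ≤ p) : ScP P r p q (p * P) = p - q := by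
  unfold ScP
  have himg : (Finset.range (p * P)).filter (fun x => skipP P r p q x)
      = (Finset.Ico q p).image (fun b => b * P + r) := by
    ext x
    rw [Finset.mem_filter, Finset.mem_image]
    simp only [Finset.mem_range, Finset.mem_Ico, skipP]
    constructor
    · rintro ⟨hx, hmod, hdiv⟩
      have hP0 : 0 < P := by omega
      have hb : x / P < p := Nat.div_lt_of_lt_mul (by rwa [mul_comm] at hx)
      refine ⟨x / P, ⟨?_, hb⟩, ?_⟩
      · rwa [Nat.mod_eq_of_lt hb] at hdiv
      · have h1 := Nat.div_add_mod x P
        have h2 : P * (x / P) = (x / P) * P := mul_comm _ _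
        omega
    · rintro ⟨b, ⟨hqb, hbp⟩, rfl⟩
      have hP0 : 0 < P := by omega
      have hdiv : (b * P + r) / P = b := by
        rw [add_comm, Nat.add_mul_div_right _ _ hP0, Nat.div_eq_of_lt hrP]; omega
      have hmod : (b * P + r) % P = r := by
        rw [mul_comm b P, Nat.mul_add_mod, Nat.mod_eq_of_lt hrP]

      refine ⟨?_, hmod, ?_⟩
      · calc b * P + r < b * P + P := by omega
          _ ≤ p * P := by
            have : b + 1 ≤ p := hbp
            calc b * P + P = (b+1) * P := by ring
              _ ≤ p * P := Nat.mul_le_mul_right _ this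
      · rw [hdiv, Nat.mod_eq_of_lt hbp]; exact hqb
  rw [himg, Finset.card_image_of_injective _ (fun a b hab => by simp at hab; omega)]
  simp

lemma phi_small (hq : 1 ≤ q) (hp : 1 ≤ p) (i : ℕ) (hi : i < P) : phiP P r p q i = i := by
  induction i with
  | zero => rfl
  | succ i ih =>
    have hii : i < P := by omega
    have hns : ¬ skipP P r p q (i + 1) := by
      intro ⟨h1, h2⟩
      have : (i+1) / P = 0 := Nat.div_eq_of_lt hi
      rw [this] at h2
      have : 0 % p = 0 := Nat.zero_mod p
      omega
    show (if skipP P r p q (phiP P r p q i + 1) then _ else _) = _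
    rw [ih hii, if_neg hns]

lemma skip_add_pP (hP : 0 < P) (x : ℕ) :
    skipP P r p q (x + p * P) ↔ skipP P r p q x := by
  unfold skipP
  rw [Nat.add_mul_mod_self_right, Nat.add_mul_div_right _ _ hP, Nat.add_mod_right]

lemma phi_k {k : ℕ} (hP : 2 ≤ P) (hr : 1 ≤ r) (hrP : r < P) (hqp : q ≤ p)
    (hkeq : k + (p - q) = p * P) : phiP P r p q k = p * P := by
  obtain ⟨hX, hXk⟩ := phi_eq_add_Sc (P := P) (r := r) (p := p) (q := q) hP hr k
  have hSc : ScP P r p q (p * P) = p - q := Sc_pP hr hrP hqp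
  have hLk : ¬ skipP P r p q (p * P) := by
    intro ⟨h1, _⟩
    rw [Nat.mul_mod_left] at h1
    omega
  set X := phiP P r p q k with hXdef
  rcases Nat.lt_trichotomy X (p * P) with h | h | h
  · have := Sc_mono_lemma (P := P) (r := r) (p := p) (q := q) X (p * P) h hXk
    omega
  · exact h
  · have := Sc_mono_lemma (P := P) (r := r) (p := p) (q := q) (p * P) X h hLk
    omega

lemma phi_add_k {k : ℕ} (hP : 2 ≤ P) (hr : 1 ≤ r) (hrP : r < P) (hqp : q ≤ p)
    (hkeq : k + (p - q) = p * P) (i : ℕ) :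
    phiP P r p q (k + i) = p * P + phiP P r p q i := by
  induction i with
  | zero => simpa [phiP] using phi_k hP hr hrP hqp hkeq
  | succ i ih =>
    show (if skipP P r p q (phiP P r p q (k+i) + 1) then phiP P r p q (k+i) + 2
      else phiP P r p q (k+i) + 1) = p * P + (if skipP P r p q (phiP P r p q i + 1)
      then phiP P r p q i + 2 else phiP P r p q i + 1)
    have hcond : skipP P r p q (phiP P r p q (k+i) + 1) ↔ skipP P r p q (phiP P r p q i + 1) := by
      rw [ih, show p * P + phiP P r p q i + 1 = (phiP P r p q i + 1) + p * P from by ring]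
      exact skip_add_pP (by omega) _
    by_cases h : skipP P r p q (phiP P r p q i + 1)
    · rw [if_pos (hcond.mpr h), if_pos h, ih]; ring
    · rw [if_neg (fun hh => h (hcond.mp hh)), if_neg h, ih]; ring

section Sums

variable {n : ℕ} (c : Fin n → Fin n → ℝ) (v : ℕ → Fin n) (P : ℕ)

/-- travel time along an abstract target sequence -/
noncomputable def ttv (i j : ℕ) : ℝ := ∑ t ∈ Finset.Ico i j, c (v t) (v (t + 1))

variable {c v P}

lemma ttv_add {i j l : ℕ} (h1 : i ≤ j) (h2 : j ≤ l) :
    ttv c v i j + ttv c v j l = ttv c v i l :=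
  Finset.sum_Ico_consecutive _ h1 h2

lemma ttv_single (x : ℕ) : ttv c v x (x+1) = c (v x) (v (x+1)) := by
  unfold ttv
  rw [Finset.sum_Ico_succ_top (le_refl x), Finset.Ico_self, Finset.sum_empty, zero_add]

lemma ttv_nonneg (hstep : ∀ t, v t ≠ v (t+1)) (hc : ∀ u w : Fin n, u ≠ w → 0 < c u w)
    (i j : ℕ) : 0 ≤ ttv c v i j :=
  Finset.sum_nonneg fun t _ => le_of_lt (hc _ _ (hstep t))

lemma ttv_mono (hstep : ∀ t, v t ≠ v (t+1)) (hc : ∀ u w : Fin n, u ≠ w → 0 < c u w)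
    {i j l : ℕ} (h1 : i ≤ j) (h2 : j ≤ l) : ttv c v i j ≤ ttv c v i l := by
  rw [← ttv_add h1 h2]
  have := ttv_nonneg (c := c) hstep hc j l
  linarith

lemma v_add_mul (hv : ∀ i, v (i + P) = v i) (a : ℕ) : ∀ i, v (i + a * P) = v i := by
  induction a with
  | zero => simp
  | succ a ih =>
    intro i
    have : i + (a+1) * P = (i + P) + a * P := by ring
    rw [this, ih, hv]

lemma v_congr (hv : ∀ i, v (i + P) = v i) {x y : ℕ} (h : x % P = y % P) : v x = v y := by
  have hx : v x = v (x % P) := by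
    conv_lhs => rw [← Nat.mod_add_div x P]
    rw [show x % P + P * (x / P) = x % P + (x / P) * P from by ring, v_add_mul hv]
  have hy : v y = v (y % P) := by
    conv_lhs => rw [← Nat.mod_add_div y P]
    rw [show y % P + P * (y / P) = y % P + (y / P) * P from by ring, v_add_mul hv]
  rw [hx, hy, h]

lemma ttv_window (hv : ∀ i, v (i + P) = v i) (m : ℕ) :
    ttv c v m (m + P) = ttv c v 0 P := by
  induction m with
  | zero => simp
  | succ m ih =>
    have h1 : ttv c v m (m + 1 + P) = ttv c v m (m+1) + ttv c v (m+1) (m+1+P) :=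
      (ttv_add (by omega) (by omega)).symm
    have h2 : ttv c v m (m + 1 + P) = ttv c v m (m+P) + ttv c v (m+P) (m+P+1) := by
      rw [show m + 1 + P = m + P + 1 from by ring]
      exact (ttv_add (by omega) (by omega)).symm
    have h3 : ttv c v (m+P) (m+P+1) = ttv c v m (m+1) := by
      rw [ttv_single, ttv_single]
      have e1 : v (m + P) = v m := hv m
      have e2 : v (m + P + 1) = v (m + 1) := by
        rw [show m + P + 1 = (m+1) + P from by ring, hv]
      rw [e1, e2]
    have : ttv c v (m+1) (m+1+P) = ttv c v m (m+P) := by linarith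
    rw [this, ih]

end Sums

lemma no_two_pairs {n : ℕ} (hn : 1 ≤ n) (g : Fin (n+1) → Fin n)
    (hg : Function.Surjective g) (x₁ x₂ y₁ y₂ : Fin (n+1)) (hx : x₁ ≠ x₂) (hy : y₁ ≠ y₂)
    (hgx : g x₁ = g x₂) (hgy : g y₁ = g y₂) (hxy : g x₁ ≠ g y₁) : False := by
  have hx2y2 : x₂ ≠ y₂ := by
    intro h
    exact hxy (by rw [hgx, h, ← hgy])
  set s : Finset (Fin (n+1)) := (Finset.univ.erase x₂).erase y₂ with hs
  have hsub : Finset.univ ⊆ s.image g := by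
    intro d _
    obtain ⟨z, hz⟩ := hg d
    by_cases h1 : z = x₂
    · apply Finset.mem_image.2
      refine ⟨x₁, ?_, by rw [hgx, ← h1]; exact hz⟩
      apply Finset.mem_erase.2
      refine ⟨?_, Finset.mem_erase.2 ⟨hx, Finset.mem_univ _⟩⟩
      intro h; exact hxy (by rw [h, hgy])
    · by_cases h2 : z = y₂
      · apply Finset.mem_image.2
        refine ⟨y₁, ?_, by rw [hgy, ← h2]; exact hz⟩
        apply Finset.mem_erase.2
        refine ⟨hy, Finset.mem_erase.2 ⟨?_, Finset.mem_univ _⟩⟩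
        intro h; exact hxy (by rw [h]; exact hgx)
      · exact Finset.mem_image.2 ⟨z, Finset.mem_erase.2 ⟨h2,
          Finset.mem_erase.2 ⟨h1, Finset.mem_univ _⟩⟩, hz⟩
  have h1 : n ≤ s.card := by
    calc n = (Finset.univ : Finset (Fin n)).card := by simp
      _ ≤ (s.image g).card := Finset.card_le_card hsub
      _ ≤ s.card := Finset.card_image_le
  have h2 : s.card = n - 1 := by
    rw [hs, Finset.card_erase_of_mem, Finset.card_erase_of_mem]
    · simp
    · exact Finset.mem_univ _
    · exact Finset.mem_erase.2 ⟨hx2y2.symm, Finset.mem_univ _⟩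
  omega

end RSAux


namespace RSAux

lemma R_nonneg {n m : ℕ} (c : Fin n → Fin n → ℝ)
    (hc : ∀ u w : Fin n, u ≠ w → 0 < c u w) (W : CWalk n m) : 0 ≤ W.R c := by
  apply Real.sSup_nonneg
  rintro T ⟨d, rfl⟩
  apply Real.sSup_nonneg
  rintro T' ⟨i, j, hij, _, _, _, rfl⟩
  exact ttv_nonneg W.step hc i j

lemma key_lemma {n : ℕ} (hn : 3 ≤ n) {k p q : ℕ} (hp : n - 1 ≤ p) (hq1 : 1 ≤ q)
    (hqn : q ≤ n - 1) (hk : k = n * p + q)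
    (c : Fin n → Fin n → ℝ) (hc : ∀ u w : Fin n, u ≠ w → 0 < c u w)
    (htri : ∀ u w z : Fin n, c u z ≤ c u w + c w z)
    (W : CWalk n (n+1)) : ∃ W' : CWalk n k, W'.R c ≤ W.R c := by
  obtain ⟨P, hP⟩ : ∃ P, P = n + 1 := ⟨n + 1, rfl⟩
  set v := W.seq with hvdef
  have hv : ∀ i, v (i + P) = v i := fun i => by rw [hP]; exact W.periodic i
  have hstepv : ∀ t, v t ≠ v (t+1) := W.step
  -- pigeonhole duplicate
  have hcard : Fintype.card (Fin n) < Fintype.card (Fin (n+1)) := by simp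
  obtain ⟨x, y, hxy, hgxy⟩ :=
    Fintype.exists_ne_map_eq_of_card_lt (fun z : Fin (n+1) => v z.val) hcard
  obtain ⟨a, b, hab, hbn, hvab⟩ : ∃ a b : ℕ, a < b ∧ b ≤ n ∧ v a = v b := by
    have hxyv : x.val ≠ y.val := fun h => hxy (Fin.ext h)
    rcases Nat.lt_or_ge x.val y.val with h | h
    · exact ⟨x.val, y.val, h, Nat.lt_succ_iff.mp y.isLt, hgxy⟩
    · exact ⟨y.val, x.val, by omega, Nat.lt_succ_iff.mp x.isLt, hgxy.symm⟩
  set r := b with hrdef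
  have hr1 : 1 ≤ r := by omega
  have hrP : r < P := by omega
  have hsurj : Function.Surjective (fun z : Fin (n+1) => v z.val) := by
    intro d; obtain ⟨i, hi, hseq⟩ := W.covers d; exact ⟨⟨i, hi⟩, hseq⟩
  have hmodmod : ∀ t : ℕ, t % P % P = t % P := fun t => Nat.mod_mod_of_dvd t dvd_rfl
  -- goodness
  have hgood : v (r - 1) ≠ v (r + 1) := by
    intro hbad
    have hmodr : (r+1) % P ≠ r - 1 := by
      rcases Nat.lt_or_ge (r+1) P with h | h
      · rw [Nat.mod_eq_of_lt h]; omega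
      · have hrp : r + 1 = P := by omega
        rw [hrp, Nat.mod_self]; omega
    have hvr1 : v ((r+1) % P) = v (r+1) := v_congr hv (hmodmod (r+1))
    refine no_two_pairs (by omega) _ hsurj ⟨a, by omega⟩ ⟨r, by omega⟩
      ⟨r - 1, by omega⟩ ⟨(r+1) % P, by rw [hP] at *; exact Nat.mod_lt _ (by omega)⟩
      (Fin.ne_of_val_ne (by simp; omega)) (Fin.ne_of_val_ne (by simpa using hmodr.symm))
      hvab ?_ ?_
    · show v (r-1) = v ((r+1) % P)
      rw [hvr1]; exact hbad
    · show v a ≠ v (r - 1)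
      rw [hvab]
      intro h
      exact hstepv (r-1) (by rw [show r - 1 + 1 = r from by omega]; exact h.symm)
  -- phi
  have hqp : q ≤ p := le_trans hqn hp
  have hkeq : k + (p - q) = p * P := by
    have h1 : p * P = n * p + p := by rw [hP]; ring
    omega
  set φ := phiP P r p q with hφ
  have hmono : StrictMono φ := phi_mono
  have hper : ∀ i, v (φ (i + k)) = v (φ i) := by
    intro i
    rw [hφ, Nat.add_comm i k, phi_add_k (by omega) hr1 hrP hqp hkeq,
      show p * P + phiP P r p q i = phiP P r p q i + p * P from by ring]
    exact v_add_mul hv p _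
  have hjump : ∀ i, v (φ i) ≠ v (φ (i+1)) ∧
      c (v (φ i)) (v (φ (i+1))) ≤ ttv c v (φ i) (φ (i+1)) := by
    intro i
    rcases phi_key (P := P) (r := r) (p := p) (q := q) i with ⟨h, _⟩ | ⟨h, hs⟩
    · rw [hφ, h]
      exact ⟨hstepv _, le_of_eq (ttv_single _).symm⟩
    · obtain ⟨hmod, _⟩ := hs
      set x := phiP P r p q i with hx
      have hd := Nat.div_add_mod (x+1) P
      have hx1 : x = P * ((x+1)/P) + (r - 1) := by omega
      have hxm : x % P = (r-1) % P := by
        conv_lhs => rw [hx1]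
        rw [Nat.mul_add_mod]
      have hx2m : (x+2) % P = (r+1) % P := by
        have hx2 : x + 2 = P * ((x+1)/P) + (r + 1) := by omega
        conv_lhs => rw [hx2]
        rw [Nat.mul_add_mod]
      have e1 : v x = v (r-1) := v_congr hv hxm
      have e2 : v (x+2) = v (r+1) := v_congr hv hx2m
      constructor
      · rw [hφ, h, ← hx, e1, e2]; exact hgood
      · rw [hφ, h, ← hx]
        have hsum : ttv c v x (x+2) = c (v x) (v (x+1)) + c (v (x+1)) (v (x+2)) := by
          rw [← ttv_add (show x ≤ x+1 by omega) (show x+1 ≤ x+2 by omega),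
            ttv_single, ttv_single]
        rw [hsum]; exact htri _ _ _
  have hsmall : ∀ i, i < P → φ i = i := fun i hi => phi_small hq1 (by omega) i hi
  have hkn : n + 1 ≤ k := by
    have h1 : n * (n-1) ≤ n * p := Nat.mul_le_mul_left n hp
    have h2 : n * 2 ≤ n * (n-1) := Nat.mul_le_mul_left n (by omega)
    omega
  have hcov : ∀ d : Fin n, ∃ i < k, v (φ i) = d := by
    intro d
    obtain ⟨i, hi, hseq⟩ := W.covers d
    exact ⟨i, by omega, by rw [hsmall i (by rw [hP]; omega)]; exact hseq⟩
  set W' : CWalk n k := ⟨fun i => v (φ i), hper, fun i => (hjump i).1, hcov⟩ with hW'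
  refine ⟨W', ?_⟩
  -- duration bound
  set dur := ttv c v 0 P with hdurdef
  have hdur0 : (0:ℝ) ≤ dur := ttv_nonneg hstepv hc 0 P
  have hwin : ∀ m, ttv c v m (m + P) = dur := fun m => ttv_window hv m
  -- singleton target
  have hn0 : (0:ℕ) < n := by omega
  have hd0 : ∃ d₀ : Fin n, d₀ ≠ v r := by
    by_cases h : v r = ⟨0, hn0⟩
    · exact ⟨⟨1, by omega⟩, by rw [h]; exact Fin.ne_of_val_ne (by simp)⟩
    · exact ⟨⟨0, hn0⟩, fun hh => h hh.symm⟩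
  obtain ⟨d₀, hd₀ne⟩ := hd0
  have hsingle : ∀ m₁ m₂, m₁ < P → m₂ < P → v m₁ = d₀ → v m₂ = d₀ → m₁ = m₂ := by
    intro m₁ m₂ h₁ h₂ e₁ e₂
    by_contra hne
    exact no_two_pairs (by omega) _ hsurj ⟨a, by omega⟩ ⟨r, by omega⟩
      ⟨m₁, by rw [hP] at *; omega⟩ ⟨m₂, by rw [hP] at *; omega⟩
      (Fin.ne_of_val_ne (by simp; omega)) (Fin.ne_of_val_ne (by simpa using hne))
      hvab (e₁.trans e₂.symm)
      (show v a ≠ v m₁ by rw [hvab, e₁]; exact fun h => hd₀ne h.symm)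
  obtain ⟨m₀, hm₀P, hm₀⟩ := W.covers d₀
  rw [← hvdef] at hm₀
  have hm₀P' : m₀ < P := by rw [hP]; exact hm₀P
  have hnobet : ∀ t, m₀ < t → t < m₀ + P → v t ≠ d₀ := by
    intro t h1 h2 he
    have hmm : v (t % P) = v t := v_congr hv (hmodmod t)
    have heq : t % P = m₀ := hsingle _ _ (Nat.mod_lt _ (by omega)) hm₀P' (hmm.trans he) hm₀
    have hd := Nat.div_add_mod t P
    rcases Nat.eq_zero_or_pos (t / P) with h0 | h0
    · rw [h0, Nat.mul_zero] at hd; omega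
    · have := Nat.mul_le_mul_left P h0
      omega
  have hmemdur : dur ∈ {T : ℝ | ∃ i j : ℕ, i < j ∧ W.seq i = d₀ ∧ W.seq j = d₀ ∧
      (∀ t, i < t → t < j → W.seq t ≠ d₀) ∧ T = W.tt c i j} := by
    refine ⟨m₀, m₀ + P, by omega, hm₀, (hv m₀).trans hm₀, hnobet, (hwin m₀).symm⟩
  have hub : ∀ T ∈ {T : ℝ | ∃ i j : ℕ, i < j ∧ W.seq i = d₀ ∧ W.seq j = d₀ ∧
      (∀ t, i < t → t < j → W.seq t ≠ d₀) ∧ T = W.tt c i j}, T ≤ dur := by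
    rintro T ⟨i, j, hij, hi, hjv, hbet, rfl⟩
    have hjle : j ≤ i + P := by
      by_contra h
      exact hbet (i + P) (by omega) (by omega) ((hv i).trans hi)
    calc W.tt c i j = ttv c v i j := rfl
      _ ≤ ttv c v i (i+P) := ttv_mono hstepv hc (le_of_lt hij) hjle
      _ = dur := hwin i
  have hRT : dur ≤ W.RT c d₀ := le_csSup ⟨dur, hub⟩ hmemdur
  have hRW : W.RT c d₀ ≤ W.R c := by
    apply le_csSup
    · have hse : {T : ℝ | ∃ d : Fin n, T = W.RT c d} = Set.range (W.RT c) := by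
        ext T; simp [Set.range, eq_comm]
      rw [hse]; exact (Set.finite_range _).bddAbove
    · exact ⟨d₀, rfl⟩
  have hdurR : dur ≤ W.R c := le_trans hRT hRW
  have hR0 : (0:ℝ) ≤ W.R c := le_trans hdur0 hdurR
  -- tt of W' versus tt of W
  have httle : ∀ i j, i ≤ j → ttv c (fun t => v (φ t)) i j ≤ ttv c v (φ i) (φ j) := by
    intro i j hij
    induction j, hij using Nat.le_induction with
    | base => simp [ttv]
    | succ j hij ih =>
      have h1 : ttv c (fun t => v (φ t)) i (j+1)
          = ttv c (fun t => v (φ t)) i j + c (v (φ j)) (v (φ (j+1))) := by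
        rw [← ttv_add hij (show j ≤ j+1 by omega), ttv_single]
      rw [h1]
      have h2 := (hjump j).2
      have h3 : ttv c v (φ i) (φ j) + ttv c v (φ j) (φ (j+1)) = ttv c v (φ i) (φ (j+1)) :=
        ttv_add (hmono.monotone hij) (hmono.monotone (by omega))
      linarith
  -- gap bound for W'
  have hgapbound : ∀ (d : Fin n) i j, i < j → v (φ i) = d → v (φ j) = d →
      (∀ t, i < t → t < j → v (φ t) ≠ d) → ttv c (fun t => v (φ t)) i j ≤ dur := by
    intro d i j hij hi hj hbet
    obtain ⟨ρ₀, hρ₀P, hρ₀⟩ := W.covers d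
    rw [← hvdef] at hρ₀
    obtain ⟨ρ, hρP, hρr, hρv⟩ : ∃ ρ, ρ < P ∧ ρ ≠ r ∧ v ρ = d := by
      by_cases h : ρ₀ = r
      · exact ⟨a, by omega, by omega, by rw [hvab, ← h]; exact hρ₀⟩
      · exact ⟨ρ₀, by rw [hP]; exact hρ₀P, h, hρ₀⟩
    set x := φ i with hxdef
    have hxd := Nat.div_add_mod x P
    have hmc : P * (x / P) = (x / P) * P := mul_comm _ _
    have hxmlt : x % P < P := Nat.mod_lt _ (by omega)
    set u := if x % P < ρ then x - x % P + ρ else x - x % P + P + ρ with hu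
    have hux : x < u ∧ u ≤ x + P ∧ u % P = ρ := by
      rw [hu]; split
      · refine ⟨by omega, by omega, ?_⟩
        rw [show x - x % P + ρ = ρ + (x / P) * P from by omega,
          Nat.add_mul_mod_self_right, Nat.mod_eq_of_lt hρP]
      · refine ⟨by omega, by omega, ?_⟩
        rw [show x - x % P + P + ρ = ρ + (x / P + 1) * P from by
          rw [Nat.add_mul, Nat.one_mul]; omega,
          Nat.add_mul_mod_self_right, Nat.mod_eq_of_lt hρP]
    obtain ⟨hu1, hu2, hu3⟩ := hux
    obtain ⟨t, ht⟩ := phi_kept (P := P) (p := p) (q := q) hr1 u (by rintro ⟨h1, _⟩; omega)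
    rw [← hφ] at ht
    have hti : i < t := hmono.lt_iff_lt.mp (by rw [ht, ← hxdef]; exact hu1)
    have htv : v (φ t) = d := by
      rw [ht]
      exact (v_congr hv (by rw [hu3, Nat.mod_eq_of_lt hρP])).trans hρv
    have htj : j ≤ t := by
      by_contra h
      exact hbet t hti (by omega) htv
    have hφj : φ j ≤ x + P := le_trans (by rw [← ht]; exact hmono.monotone htj) hu2
    calc ttv c (fun t => v (φ t)) i j ≤ ttv c v (φ i) (φ j) := httle i j (le_of_lt hij)
      _ ≤ ttv c v x (x + P) := ttv_mono hstepv hc (hmono.monotone (le_of_lt hij)) hφj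
      _ = dur := hwin x
  -- assemble
  show W'.R c ≤ W.R c
  apply Real.sSup_le _ hR0
  rintro T ⟨d, rfl⟩
  apply Real.sSup_le _ hR0
  rintro T' ⟨i, j, hij, hi, hj, hbet, rfl⟩
  exact le_trans (hgapbound d i j hij hi hj hbet) hdurR

end RSAux

/-- if `k > n² - n` and `k` is not a multiple of `n`, then
`R*(k) ≤ R*(n+1)`. -/
theorem Rstar_le_Rstar_succ_n
    (n k : ℕ) (hn : 2 ≤ n) (hk : n ^ 2 - n < k) (hnd : ¬ n ∣ k)
    (c : Fin n → Fin n → ℝ)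
    (hc : ∀ u v : Fin n, u ≠ v → 0 < c u v)
    (htri : ∀ u v w : Fin n, c u w ≤ c u v + c v w) :
    Rstar n c k ≤ Rstar n c (n + 1) := by
  classical
  rcases Nat.lt_or_ge n 3 with h3 | h3
  · -- n = 2 : both sets are empty
    have hn2 : n = 2 := by omega
    subst hn2
    have hpar : ∀ (m : ℕ) (W : CWalk 2 m), m % 2 = 0 := by
      intro m W
      have h2 : ∀ i, W.seq (i+2) = W.seq i := by
        intro i
        have e1 := W.step i
        have e2 := W.step (i+1)
        have key : ∀ x y z : Fin 2, x ≠ y → y ≠ z → x = z := by decide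
        exact (key _ _ _ e1 e2).symm
      have h2a : ∀ a i, W.seq (i + 2*a) = W.seq i := by
        intro a
        induction a with
        | zero => simp
        | succ a ih =>
          intro i
          rw [show i + 2*(a+1) = (i + 2*a) + 2 from by ring, h2, ih]
      by_contra hodd
      have e3 : W.seq m = W.seq 0 := by
        have := W.periodic 0; rwa [zero_add] at this
      have e4 : W.seq m = W.seq 1 := by
        have := h2a (m/2) 1
        rw [show 1 + 2*(m/2) = m from by omega] at this
        exact this
      exact W.step 0 (by rw [← e3, e4])
    have hSk : {T : ℝ | ∃ W : CWalk 2 k, T = W.R c} = ∅ := by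
      ext T
      simp only [Set.mem_setOf_eq, Set.mem_empty_iff_false, iff_false]
      rintro ⟨W, _⟩
      have h := hpar k W
      exact hnd (Nat.dvd_of_mod_eq_zero h)
    have hS3 : {T : ℝ | ∃ W : CWalk 2 (2+1), T = W.R c} = ∅ := by
      ext T
      simp only [Set.mem_setOf_eq, Set.mem_empty_iff_false, iff_false]
      rintro ⟨W, _⟩
      have h := hpar 3 W
      omega
    unfold Rstar
    rw [hSk, hS3, Real.sInf_empty]
  · -- main case
    have hn0 : 0 < n := by omega
    have hq1 : 1 ≤ k % n := by
      rcases Nat.eq_zero_or_pos (k % n) with h | h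
      · exact absurd (Nat.dvd_of_mod_eq_zero h) hnd
      · exact h
    have hqn : k % n ≤ n - 1 := by
      have := Nat.mod_lt k hn0
      omega
    have hpn : n - 1 ≤ k / n := by
      rw [Nat.le_div_iff_mul_le hn0]
      have h1 : (n-1) * n = n * n - n := by
        rw [Nat.sub_mul, Nat.one_mul]
      have h2 : n ^ 2 = n * n := by ring
      omega
    have hkdec : k = n * (k / n) + k % n := (Nat.div_add_mod k n).symm
    -- an example walk with n+1 visits
    have hex : Nonempty (CWalk n (n+1)) := by
      refine ⟨⟨fun i => if h : i % (n+1) < n then ⟨i % (n+1), h⟩ else ⟨1, by omega⟩,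
        ?_, ?_, ?_⟩⟩
      · intro i
        simp only [Nat.add_mod_right]
      · intro i
        beta_reduce
        have hj : i % (n+1) < n + 1 := Nat.mod_lt _ (by omega)
        have hj1 : (i+1) % (n+1) = (i % (n+1) + 1) % (n+1) := (Nat.mod_add_mod i (n+1) 1).symm
        set j := i % (n+1) with hjdef
        rcases Nat.lt_or_ge (j+1) (n+1) with h | h
        · rw [hj1, Nat.mod_eq_of_lt h]
          rcases Nat.lt_or_ge (j+1) n with h2 | h2
          · rw [dif_pos (show j < n by omega), dif_pos h2]
            exact Fin.ne_of_val_ne (by simp)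
          · have hjn : j + 1 = n := by omega
            rw [dif_pos (show j < n by omega), dif_neg (by omega)]
            exact Fin.ne_of_val_ne (by simp; omega)
        · have hjn : j = n := by omega
          rw [hj1, hjn, Nat.mod_self, dif_neg (by omega), dif_pos (show 0 < n by omega)]
          exact Fin.ne_of_val_ne (by simp)
      · intro d
        refine ⟨d.val, by omega, ?_⟩
        beta_reduce
        have hd : d.val % (n+1) = d.val := Nat.mod_eq_of_lt (by omega)
        rw [dif_pos (by rw [hd]; exact d.isLt)]
        exact Fin.ext (by simp [hd])
    obtain ⟨W₀⟩ := hex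
    have hbdd : BddBelow {T : ℝ | ∃ W : CWalk n k, T = W.R c} := by
      refine ⟨0, ?_⟩
      rintro T ⟨W'', rfl⟩
      exact RSAux.R_nonneg c hc W''
    unfold Rstar
    refine le_csInf ⟨W₀.R c, W₀, rfl⟩ ?_
    rintro T ⟨W, rfl⟩
    obtain ⟨W', hW'⟩ := RSAux.key_lemma h3 hpn hq1 hqn hkdec c hc htri W
    exact le_trans (csInf_le hbdd ⟨W', rfl⟩) hW'
end
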